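/- arXiv:2406.06630 — 4 statements merged into one kernel-verified Lean document; each statement's English description precedes it below -/
import Mathlib

section
/- Let g : J × I → ℝ be Lipschitz continuous with ε ≤ g ≤ K on the closed ball around x₂ of radius b times I, where 0 < ε ≤ K and x₂ - x₁ ∈ (0, (b/K)ε). Then for every continuous prehistory φ : [-h,0] → I with h = b/K, the initial value problem y'(s) = -g(y(s), φ(-s)), y(0) = x₂ has a unique solution y_φ on [0,h], and there is a unique τ(φ) ∈ [0,h] with y_φ(τ(φ)) = x₁. -/
open Set

/-- Remark 2.4 (`τ` and `y` are well-defined): under the basic assumptions on `g`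
(Lipschitz on `J × I`, `ε ≤ g ≤ K` on `B̄(x₂,b) × I`, `x₂ - x₁ ∈ (0, (b/K)ε)`),
for every continuous prehistory `φ : [-h,0] → I` with `h = b/K` the IVP
`y'(s) = -g(y(s), φ(-s))`, `y(0) = x₂` has a unique solution on `[0,h]`, and there is a
unique `τ(φ) ∈ [0,h]` with `y(τ(φ)) = x₁`. -/
theorem tau_and_y_well_defined
    (I J : Set ℝ) (hIopen : IsOpen I) (hJopen : IsOpen J)
    (x₁ x₂ b ε K : ℝ) (L : NNReal) (hx12 : x₁ < x₂) (hb : 0 < b)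
    (hball : Metric.closedBall x₂ b ⊆ J)
    (g : ℝ → ℝ → ℝ)
    (hgLip : LipschitzOnWith L (fun p : ℝ × ℝ => g p.1 p.2) (J ×ˢ I))
    (hε : 0 < ε) (hεK : ε ≤ K)
    (hbd : ∀ x ∈ Metric.closedBall x₂ b, ∀ z ∈ I, ε ≤ g x z ∧ g x z ≤ K)
    (hgap : x₂ - x₁ ∈ Ioo 0 (b / K * ε))
    (φ : ℝ → ℝ) (hφc : ContinuousOn φ (Icc (-(b / K)) 0))
    (hφI : ∀ t ∈ Icc (-(b / K)) 0, φ t ∈ I) :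
    ∃ y : ℝ → ℝ,
      (y 0 = x₂ ∧
        ∀ s ∈ Icc (0 : ℝ) (b / K),
          HasDerivWithinAt y (-(g (y s) (φ (-s)))) (Icc (0 : ℝ) (b / K)) s) ∧
      (∀ z : ℝ → ℝ, z 0 = x₂ →
        (∀ s ∈ Icc (0 : ℝ) (b / K),
          HasDerivWithinAt z (-(g (z s) (φ (-s)))) (Icc (0 : ℝ) (b / K)) s) →
        ∀ s ∈ Icc (0 : ℝ) (b / K), z s = y s) ∧
      (∃! τ : ℝ, τ ∈ Icc (0 : ℝ) (b / K) ∧ y τ = x₁) := by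
  set h := b / K with hh
  have hK0 : 0 < K := hε.trans_le hεK
  have hh0 : 0 < h := div_pos hb hK0
  have hKh : K * h = b := by rw [hh]; field_simp
  -- membership of `-t` in the prehistory interval
  have hmemI : ∀ t ∈ Icc (0 : ℝ) h, φ (-t) ∈ I := fun t ht =>
    hφI _ ⟨by linarith [ht.2], by linarith [ht.1]⟩
  -- Lipschitz continuity of the (time-dependent) vector field on the ball
  have hvLip : ∀ t ∈ Icc (0 : ℝ) h,
      LipschitzOnWith L (fun x => -(g x (φ (-t)))) (Metric.closedBall x₂ b) := by
    intro t ht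
    rw [lipschitzOnWith_iff_dist_le_mul]
    intro x hx x' hx'
    rw [dist_neg_neg]
    have hzI : φ (-t) ∈ I := hmemI t ht
    have := hgLip.dist_le_mul (x, φ (-t)) ⟨hball hx, hzI⟩ (x', φ (-t)) ⟨hball hx', hzI⟩
    simpa [Prod.dist_eq, dist_self, max_eq_left dist_nonneg] using this
  -- norm bound on the vector field on the ball
  have hvBd : ∀ t ∈ Icc (0 : ℝ) h, ∀ x ∈ Metric.closedBall x₂ b,
      ‖-(g x (φ (-t)))‖ ≤ K := by
    intro t ht x hx
    obtain ⟨h1, h2⟩ := hbd x hx _ (hmemI t ht)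
    rw [norm_neg, Real.norm_eq_abs, abs_of_pos (hε.trans_le h1)]
    exact h2
  -- Picard–Lindelöf hypotheses
  have hpl : IsPicardLindelof (fun t x => -(g x (φ (-t)))) (tmin := 0) (tmax := h)
      ⟨0, le_rfl, hh0.le⟩ x₂ ⟨b, hb.le⟩ 0 ⟨K, hK0.le⟩ L :=
    { lipschitzOnWith := hvLip
      continuousOn := by
        intro x hx
        have hgx : LipschitzOnWith L (fun z => g x z) I := by
          rw [lipschitzOnWith_iff_dist_le_mul]
          intro z hz z' hz'
          have := hgLip.dist_le_mul (x, z) ⟨hball hx, hz⟩ (x, z') ⟨hball hx, hz'⟩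
          simpa [Prod.dist_eq, dist_self, max_eq_right dist_nonneg] using this
        have hφt : ContinuousOn (fun t : ℝ => φ (-t)) (Icc 0 h) :=
          hφc.comp continuous_neg.continuousOn
            (fun t ht => ⟨by linarith [ht.2], by linarith [ht.1]⟩)
        exact (hgx.continuousOn.comp hφt (fun t ht => hmemI t ht)).neg
      norm_le := hvBd
      mul_max_le := by
        show K * max (h - 0) (0 - 0) ≤ b - 0
        simp only [sub_zero]
        rw [max_eq_left hh0.le, hKh] }
  obtain ⟨y, hy0, hy'⟩ : ∃ y : ℝ → ℝ, y 0 = x₂ ∧ ∀ t ∈ Icc (0 : ℝ) h,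
      HasDerivWithinAt y (-(g (y t) (φ (-t)))) (Icc (0 : ℝ) h) t :=
    hpl.exists_eq_forall_mem_Icc_hasDerivWithinAt₀
  -- a priori bound: any solution stays in the closed ball
  have stays : ∀ z : ℝ → ℝ, z 0 = x₂ →
      (∀ s ∈ Icc (0 : ℝ) h, HasDerivWithinAt z (-(g (z s) (φ (-s)))) (Icc (0 : ℝ) h) s) →
      ∀ s ∈ Icc (0 : ℝ) h, ‖z s - x₂‖ ≤ K * s := by
    intro z hz0 hz'
    have hzc : ContinuousOn z (Icc 0 h) := fun s hs => (hz' s hs).continuousWithinAt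
    by_contra hcon
    push_neg at hcon
    obtain ⟨s₀, hs₀, hgt⟩ := hcon
    set A := {s | s ∈ Icc (0 : ℝ) h ∧ K * s < ‖z s - x₂‖} with hA
    have hAne : A.Nonempty := ⟨s₀, hs₀, hgt⟩
    have hAbdd : BddBelow A := ⟨0, fun t ht => ht.1.1⟩
    set T := sInf A with hT
    have hT0 : 0 ≤ T := le_csInf hAne fun t ht => ht.1.1
    have hTh : T ≤ h := (csInf_le hAbdd ⟨hs₀, hgt⟩).trans hs₀.2
    -- the segment estimate
    have seg : ∀ t ∈ Icc (0 : ℝ) h, (∀ s ∈ Ico (0 : ℝ) t, z s ∈ Metric.closedBall x₂ b) →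
        ‖z t - x₂‖ ≤ K * t := by
      intro t ht hmem
      have key := norm_image_sub_le_of_norm_deriv_right_le_segment
        (f := z) (f' := fun s => -(g (z s) (φ (-s)))) (a := 0) (b := t) (C := K)
        (hzc.mono (Icc_subset_Icc le_rfl ht.2))
        (fun s hs => (hz' s ⟨hs.1, hs.2.le.trans ht.2⟩).mono_of_mem_nhdsWithin
          (Icc_mem_nhdsGE_of_mem ⟨hs.1, lt_of_lt_of_le hs.2 ht.2⟩))
        (fun s hs => hvBd s ⟨hs.1, hs.2.le.trans ht.2⟩ _ (hmem s hs))
      have := key t ⟨ht.1, le_rfl⟩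
      simpa [hz0] using this
    have hballT : ∀ s ∈ Ico (0 : ℝ) T, z s ∈ Metric.closedBall x₂ b := by
      intro s hs
      have hsnA : s ∉ A := fun hsa => absurd (csInf_le hAbdd hsa) (not_le.mpr hs.2)
      have hsI : s ∈ Icc (0 : ℝ) h := ⟨hs.1, hs.2.le.trans hTh⟩
      have hle : ‖z s - x₂‖ ≤ K * s := by
        by_contra hc; exact hsnA ⟨hsI, not_le.mp hc⟩
      have : K * s ≤ b := hKh ▸ mul_le_mul_of_nonneg_left hsI.2 hK0.le
      rw [Metric.mem_closedBall, dist_eq_norm]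
      linarith
    have hTle : ‖z T - x₂‖ ≤ K * T := seg T ⟨hT0, hTh⟩ hballT
    rcases eq_or_lt_of_le hTh with hTeq | hTlt
    · obtain ⟨t, htA⟩ := hAne
      have htT : t = T := le_antisymm (hTeq ▸ htA.1.2) (csInf_le hAbdd htA)
      rw [htT] at htA
      exact absurd hTle (not_le.mpr htA.2)
    · have hKTb : K * T < b := by
        have : K * T < K * h := by
          exact mul_lt_mul_of_pos_left hTlt hK0
        linarith [hKh]
      have hcw : ContinuousWithinAt (fun s => ‖z s - x₂‖) (Icc 0 h) T :=
        ((hzc T ⟨hT0, hTh⟩).sub continuousWithinAt_const).norm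
      obtain ⟨δ, hδ0, hδ⟩ := Metric.continuousWithinAt_iff.mp hcw (b - ‖z T - x₂‖)
        (by linarith)
      set δ' := min (δ / 2) (h - T) with hδ'
      have hδ'0 : 0 < δ' := lt_min (by linarith) (by linarith)
      obtain ⟨t, htA, htlt⟩ := exists_lt_of_csInf_lt hAne
        (show sInf A < T + δ' by rw [← hT]; linarith)
      have hTt : T ≤ t := csInf_le hAbdd htA
      have hfin : ‖z t - x₂‖ ≤ K * t := by
        apply seg t htA.1
        intro s hs
        rcases lt_or_ge s T with h1 | h1
        · exact hballT s ⟨hs.1, h1⟩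
        · have hsI : s ∈ Icc (0 : ℝ) h := ⟨hs.1, (hs.2.le.trans htA.1.2)⟩
          have hsδ : dist s T < δ := by
            rw [Real.dist_eq, abs_of_nonneg (by linarith)]
            have h2 : s < T + δ' := lt_of_lt_of_le hs.2 htlt.le
            have h3 : δ' ≤ δ / 2 := min_le_left _ _
            linarith
          have := hδ hsI hsδ
          rw [Real.dist_eq] at this
          have := abs_lt.mp this
          rw [Metric.mem_closedBall, dist_eq_norm]
          linarith [this.2]
      exact absurd hfin (not_le.mpr htA.2)
    -- end of stays
  have ymem : ∀ s ∈ Icc (0 : ℝ) h, y s ∈ Metric.closedBall x₂ b := by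
    intro s hs
    have h1 := stays y hy0 hy' s hs
    have h2 : K * s ≤ b := hKh ▸ mul_le_mul_of_nonneg_left hs.2 hK0.le
    rw [Metric.mem_closedBall, dist_eq_norm]
    linarith
  have hyc : ContinuousOn y (Icc 0 h) := fun s hs => (hy' s hs).continuousWithinAt
  -- uniqueness of the solution
  have uniq : ∀ z : ℝ → ℝ, z 0 = x₂ →
      (∀ s ∈ Icc (0 : ℝ) h, HasDerivWithinAt z (-(g (z s) (φ (-s)))) (Icc (0 : ℝ) h) s) →
      ∀ s ∈ Icc (0 : ℝ) h, z s = y s := by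
    intro z hz0 hz'
    have hzc : ContinuousOn z (Icc 0 h) := fun s hs => (hz' s hs).continuousWithinAt
    have zmem : ∀ s ∈ Icc (0 : ℝ) h, z s ∈ Metric.closedBall x₂ b := by
      intro s hs
      have h1 := stays z hz0 hz' s hs
      have h2 : K * s ≤ b := hKh ▸ mul_le_mul_of_nonneg_left hs.2 hK0.le
      rw [Metric.mem_closedBall, dist_eq_norm]
      linarith
    have := ODE_solution_unique_of_mem_Icc_right
      (v := fun t x => -(g x (φ (-t))))
      (s := fun t => if t ∈ Icc (0 : ℝ) h then Metric.closedBall x₂ b else (∅ : Set ℝ))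
      (K := L) (f := z) (g := y) (a := 0) (b := h)
      (fun t _ => by
        by_cases ht : t ∈ Icc (0 : ℝ) h
        · simpa [ht] using hvLip t ht
        · simp [ht])
      hzc
      (fun t ht => (hz' t (Ico_subset_Icc_self ht)).mono_of_mem_nhdsWithin
        (Icc_mem_nhdsGE_of_mem ⟨ht.1, ht.2⟩))
      (fun t ht => by
        simp only [if_pos (Ico_subset_Icc_self ht)]
        exact zmem t (Ico_subset_Icc_self ht))
      hyc
      (fun t ht => (hy' t (Ico_subset_Icc_self ht)).mono_of_mem_nhdsWithin
        (Icc_mem_nhdsGE_of_mem ⟨ht.1, ht.2⟩))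
      (fun t ht => by
        simp only [if_pos (Ico_subset_Icc_self ht)]
        exact ymem t (Ico_subset_Icc_self ht))
      (by rw [hz0, hy0])
    exact fun s hs => this hs
  -- strict monotonicity of y
  have gpos : ∀ s ∈ Icc (0 : ℝ) h, ε ≤ g (y s) (φ (-s)) :=
    fun s hs => (hbd _ (ymem s hs) _ (hmemI s hs)).1
  have hderivAt : ∀ s ∈ Ioo (0 : ℝ) h, HasDerivAt y (-(g (y s) (φ (-s)))) s := by
    intro s hs
    exact (hy' s ⟨hs.1.le, hs.2.le⟩).hasDerivAt (Icc_mem_nhds hs.1 hs.2)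
  have hanti : StrictAntiOn y (Icc 0 h) := by
    apply strictAntiOn_of_deriv_neg (convex_Icc 0 h) hyc
    intro s hs
    rw [interior_Icc] at hs
    rw [(hderivAt s hs).deriv]
    have := gpos s ⟨hs.1.le, hs.2.le⟩
    linarith
  -- y h is below x₁
  have hyh : y h + ε * h ≤ x₂ := by
    have hw : AntitoneOn (fun s => y s + ε * s) (Icc 0 h) := by
      apply antitoneOn_of_deriv_nonpos (convex_Icc 0 h)
        (hyc.add (continuousOn_const.mul continuousOn_id))
      · intro s hs
        rw [interior_Icc] at hs
        exact ((hderivAt s hs).add ((hasDerivAt_id s).const_mul ε)).differentiableAt.differentiableWithinAt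
      · intro s hs
        rw [interior_Icc] at hs
        rw [show (y + (fun x => ε) * id) = (y + fun y => ε * id y) from rfl,
          ((hderivAt s hs).add ((hasDerivAt_id s).const_mul ε)).deriv]
        have := gpos s ⟨hs.1.le, hs.2.le⟩
        simp only [mul_one]
        linarith
    have := hw (left_mem_Icc.mpr hh0.le) (right_mem_Icc.mpr hh0.le) hh0.le
    simpa [hy0] using this
  have hyhx₁ : y h < x₁ := by
    have h2 := hgap.2
    have : b / K * ε = ε * h := by rw [hh]; ring
    rw [this] at h2
    linarith
  -- existence and uniqueness of τ
  have hx₁mem : x₁ ∈ Icc (y h) (y 0) := ⟨hyhx₁.le, by rw [hy0]; linarith⟩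
  obtain ⟨τ, hτmem, hτ⟩ := intermediate_value_Icc' hh0.le hyc hx₁mem
  refine ⟨y, ⟨hy0, hy'⟩, uniq, τ, ⟨hτmem, hτ⟩, ?_⟩
  rintro τ' ⟨hτ'mem, hτ'⟩
  exact hanti.injOn hτ'mem hτmem (by rw [hτ', hτ])
end

section
/- The delay function τ : H^1(-h,0;ℝ) → [0,h] defined implicitly by y_φ(τ(φ)) = x₁ is Lipschitz continuous with respect to the H^1 norm; explicitly, ε |τ(φ) - τ(ψ)| ≤ (L²(h^{1/2} + h^{-1/2}) ∫₀^h t e^{Lt} dt + L√h) ‖φ - ψ‖_{H^1(-h,0;ℝ)}. -/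
open MeasureTheory Set

open intervalIntegral


lemma my_cs {a b : ℝ} (hab : a ≤ b) {f : ℝ → ℝ}
    (h1 : IntervalIntegrable f volume a b)
    (h2 : IntervalIntegrable (fun t => f t ^ 2) volume a b) :
    ∫ t in a..b, |f t| ≤ Real.sqrt (b - a) * Real.sqrt (∫ t in a..b, f t ^ 2) := by
  set A := ∫ t in a..b, f t ^ 2 with hA
  set B := ∫ t in a..b, |f t| with hB
  have habs : IntervalIntegrable (fun t => |f t|) volume a b := h1.abs
  have hAnn : 0 ≤ A := integral_nonneg hab (fun u _ => sq_nonneg _)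
  have hBnn : 0 ≤ B := integral_nonneg hab (fun u _ => abs_nonneg _)
  have key : ∀ t : ℝ, 0 ≤ t ^ 2 * A - 2 * t * B + (b - a) := by
    intro t
    have expand : ∀ u : ℝ, t ^ 2 * f u ^ 2 - 2 * t * |f u| + 1 = (t * |f u| - 1) ^ 2 := by
      intro u; rw [sub_sq, mul_pow, sq_abs]; ring
    have hint : IntervalIntegrable (fun u => t ^ 2 * f u ^ 2 - 2 * t * |f u| + 1) volume a b :=
      ((h2.const_mul _).sub (habs.const_mul _)).add (intervalIntegrable_const)
    have h0 : 0 ≤ ∫ u in a..b, (t ^ 2 * f u ^ 2 - 2 * t * |f u| + 1) := by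
      refine integral_nonneg hab (fun u _ => ?_)
      rw [expand u]; positivity
    calc (0:ℝ) ≤ ∫ u in a..b, (t ^ 2 * f u ^ 2 - 2 * t * |f u| + 1) := h0
      _ = t ^ 2 * A - 2 * t * B + (b - a) := by
          rw [integral_add ((h2.const_mul _).sub (habs.const_mul _)) intervalIntegrable_const,
            integral_sub (h2.const_mul _) (habs.const_mul _), intervalIntegral.integral_const_mul,
            intervalIntegral.integral_const_mul, intervalIntegral.integral_const]
          simp; rfl
  have hBA : B ^ 2 ≤ (b - a) * A := by
    rcases eq_or_lt_of_le hAnn with hA0 | hA0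
    · have hB0 : B ≤ 0 := by
        by_contra hB0
        push_neg at hB0
        have := key ((b - a + 1) / (2 * B))
        rw [← hA0] at this
        have h2B : (0:ℝ) < 2 * B := by linarith
        nlinarith [div_mul_cancel₀ (b - a + 1) (ne_of_gt h2B)]
      have : B = 0 := le_antisymm hB0 hBnn
      rw [this]; nlinarith
    · have := key (B / A)
      have hA0' : A ≠ 0 := ne_of_gt hA0
      rw [div_pow] at this
      have heq : B ^ 2 / A ^ 2 * A = B ^ 2 / A := by field_simp
      rw [heq] at this
      have heq2 : 2 * (B / A) * B = 2 * (B ^ 2 / A) := by field_simp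
      rw [heq2] at this
      have h1' : B ^ 2 / A ≤ b - a := by linarith
      calc B ^ 2 = B ^ 2 / A * A := by field_simp
        _ ≤ (b - a) * A := by nlinarith
  calc B = Real.sqrt (B ^ 2) := (Real.sqrt_sq hBnn).symm
    _ ≤ Real.sqrt ((b - a) * A) := Real.sqrt_le_sqrt hBA
    _ = Real.sqrt (b - a) * Real.sqrt A := Real.sqrt_mul (by linarith) A


lemma my_sob {h : ℝ} (hh : 0 < h) {d d' : ℝ → ℝ}
    (hftc : ∀ s ∈ Icc (-h) 0, ∀ t ∈ Icc (-h) 0, d t = d s + ∫ u in s..t, d' u)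
    (hd'int : IntervalIntegrable d' volume (-h) 0)
    (hd2 : IntervalIntegrable (fun t => d t ^ 2) volume (-h) 0)
    (hd'2 : IntervalIntegrable (fun t => d' t ^ 2) volume (-h) 0) :
    ∀ t ∈ Icc (-h) 0, |d t| ≤
      (Real.sqrt h)⁻¹ * Real.sqrt (∫ u in (-h)..0, d u ^ 2) +
      Real.sqrt h * Real.sqrt (∫ u in (-h)..0, d' u ^ 2) := by
  have hh0 : -h ≤ 0 := by linarith
  set A := ∫ u in (-h)..0, d u ^ 2 with hA
  set A' := ∫ u in (-h)..0, d' u ^ 2 with hA'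
  have hAnn : 0 ≤ A := integral_nonneg hh0 (fun u _ => sq_nonneg _)
  have hA'nn : 0 ≤ A' := integral_nonneg hh0 (fun u _ => sq_nonneg _)
  have hsq : (0:ℝ) < Real.sqrt h := Real.sqrt_pos.mpr hh
  -- continuity of d
  have hdc : ContinuousOn d (Icc (-h) 0) := by
    have hprim : ContinuousOn (fun t => d (-h) + ∫ u in (-h)..t, d' u) (Icc (-h) 0) := by
      have := continuousOn_primitive_interval' hd'int (left_mem_uIcc (a := -h) (b := 0))
      rw [uIcc_of_le hh0] at this
      exact continuousOn_const.add this
    exact ContinuousOn.congr hprim (fun t ht => hftc (-h) (left_mem_Icc.mpr hh0) t ht)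
  -- minimum point
  obtain ⟨s₀, hs₀, hmin⟩ := isCompact_Icc.exists_isMinOn (nonempty_Icc.mpr hh0)
    (continuous_abs.comp_continuousOn hdc)
  set m := |d s₀| with hm
  have hmnn : 0 ≤ m := abs_nonneg _
  have hmA : m * Real.sqrt h ≤ Real.sqrt A := by
    have h1 : m ^ 2 * h ≤ A := by
      have : ∫ _ in (-h)..0, m ^ 2 ≤ A := by
        refine integral_mono_on hh0 intervalIntegrable_const hd2 (fun u hu => ?_)
        have h5 : |d s₀| ≤ |d u| := hmin hu
        calc m ^ 2 = |d s₀| ^ 2 := rfl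
          _ ≤ |d u| ^ 2 := by nlinarith [abs_nonneg (d u), abs_nonneg (d s₀)]
          _ = d u ^ 2 := sq_abs _
      rw [intervalIntegral.integral_const] at this
      simp only [smul_eq_mul, sub_neg_eq_add, zero_add] at this
      linarith [this]
    have h2 : (m * Real.sqrt h) ^ 2 ≤ A := by
      rw [mul_pow, Real.sq_sqrt hh.le]; exact h1
    have := Real.sqrt_le_sqrt h2
    rwa [Real.sqrt_sq (by positivity)] at this
  have hmle : m ≤ (Real.sqrt h)⁻¹ * Real.sqrt A := by
    rw [le_inv_mul_iff₀ hsq, mul_comm]; exact hmA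
  intro t ht
  have hrepr := hftc s₀ hs₀ t ht
  have hint : |∫ u in s₀..t, d' u| ≤ Real.sqrt h * Real.sqrt A' := by
    have hsub : Set.uIoc s₀ t ⊆ Set.uIoc (-h) 0 := by
      rw [uIoc_of_le hh0]
      refine Set.Subset.trans ?_ (Ioc_subset_Ioc (le_min hs₀.1 ht.1) (max_le hs₀.2 ht.2))
      rw [Set.uIoc]
    have h1 : |∫ u in s₀..t, d' u| ≤ |(∫ u in s₀..t, |d' u|)| := by
      simpa [Real.norm_eq_abs] using
        intervalIntegral.norm_integral_le_abs_integral_norm (μ := volume) (f := d') (a := s₀) (b := t)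
    have h2 : |(∫ u in s₀..t, |d' u|)| ≤ |(∫ u in (-h)..0, |d' u|)| :=
      abs_integral_mono_interval hsub (Filter.Eventually.of_forall (fun u => abs_nonneg _)) hd'int.abs
    have h3 : |(∫ u in (-h)..0, |d' u|)| = ∫ u in (-h)..0, |d' u| :=
      abs_of_nonneg (integral_nonneg hh0 (fun u _ => abs_nonneg _))
    have h4 : ∫ u in (-h)..0, |d' u| ≤ Real.sqrt h * Real.sqrt A' := by
      have hcs := my_cs hh0 hd'int hd'2
      have e : (0 : ℝ) - -h = h := by ring
      rw [e] at hcs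
      exact hcs
    linarith
  calc |d t| = |d s₀ + ∫ u in s₀..t, d' u| := by rw [← hrepr]
    _ ≤ m + |∫ u in s₀..t, d' u| := abs_add_le _ _
    _ ≤ (Real.sqrt h)⁻¹ * Real.sqrt A + Real.sqrt h * Real.sqrt A' := add_le_add hmle hint

lemma cont_of_ftc {h : ℝ} (hh0 : -h ≤ 0) {φ φ' : ℝ → ℝ}
    (hftc : ∀ s ∈ Icc (-h) 0, ∀ t ∈ Icc (-h) 0, φ t = φ s + ∫ u in s..t, φ' u)
    (hint : IntervalIntegrable φ' volume (-h) 0) :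
    ContinuousOn φ (Icc (-h) 0) := by
  have hprim : ContinuousOn (fun t => φ (-h) + ∫ u in (-h)..t, φ' u) (Icc (-h) 0) := by
    have := intervalIntegral.continuousOn_primitive_interval' hint (left_mem_uIcc (a := -h) (b := 0))
    rw [uIcc_of_le hh0] at this
    exact continuousOn_const.add this
  exact ContinuousOn.congr hprim (fun t ht => hftc (-h) (left_mem_Icc.mpr hh0) t ht)

lemma exp_sub_one_le {x : ℝ} (hx : 0 ≤ x) : Real.exp x - 1 ≤ x * Real.exp x := by
  have h1 := Real.add_one_le_exp (-x)
  have h2 : Real.exp (-x) * Real.exp x = 1 := by rw [← Real.exp_add]; simp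
  nlinarith [Real.exp_pos x]

set_option maxHeartbeats 1000000 in
lemma tau_key
    (I : Set ℝ)
    (x₁ x₂ b ε K L h : ℝ) (hh : h = b / K) (hb : 0 < b)
    (hε : 0 < ε) (hεK : ε ≤ K) (hL : 0 ≤ L)
    (g : ℝ → ℝ → ℝ)
    (hgLip : ∀ x z x' z', |g x z - g x' z'| ≤ L * (|x - x'| + |z - z'|))
    (hbd : ∀ x ∈ Metric.closedBall x₂ b, ∀ z ∈ I, ε ≤ g x z ∧ g x z ≤ K)
    (φ φ' ψ ψ' : ℝ → ℝ)
    (hφftc : ∀ s ∈ Icc (-h) 0, ∀ t ∈ Icc (-h) 0, φ t = φ s + ∫ u in s..t, φ' u)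
    (hψftc : ∀ s ∈ Icc (-h) 0, ∀ t ∈ Icc (-h) 0, ψ t = ψ s + ∫ u in s..t, ψ' u)
    (hφint : IntervalIntegrable φ' volume (-h) 0)
    (hψint : IntervalIntegrable ψ' volume (-h) 0)
    (hφ2 : IntervalIntegrable (fun t => (φ t - ψ t) ^ 2) volume (-h) 0)
    (hφ'2 : IntervalIntegrable (fun t => (φ' t - ψ' t) ^ 2) volume (-h) 0)
    (hφI : ∀ t ∈ Icc (-h) 0, φ t ∈ I) (hψI : ∀ t ∈ Icc (-h) 0, ψ t ∈ I)
    (yφ yψ : ℝ → ℝ) (hyφ0 : yφ 0 = x₂) (hyψ0 : yψ 0 = x₂)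
    (hyφball : ∀ s ∈ Icc (0 : ℝ) h, yφ s ∈ Metric.closedBall x₂ b)
    (hyψball : ∀ s ∈ Icc (0 : ℝ) h, yψ s ∈ Metric.closedBall x₂ b)
    (hyφ : ∀ s ∈ Icc (0 : ℝ) h, HasDerivWithinAt yφ (-(g (yφ s) (φ (-s)))) (Icc (0 : ℝ) h) s)
    (hyψ : ∀ s ∈ Icc (0 : ℝ) h, HasDerivWithinAt yψ (-(g (yψ s) (ψ (-s)))) (Icc (0 : ℝ) h) s)
    (τφ τψ : ℝ) (hτφ : τφ ∈ Icc (0 : ℝ) h) (hτψ : τψ ∈ Icc (0 : ℝ) h)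
    (hτφx : yφ τφ = x₁) (hτψx : yψ τψ = x₁) (hle : τψ ≤ τφ) :
    ε * (τφ - τψ) ≤
      (L ^ 2 * (Real.sqrt h + (Real.sqrt h)⁻¹) * (∫ t in (0 : ℝ)..h, t * Real.exp (L * t)) +
          L * Real.sqrt h) *
        Real.sqrt ((∫ u in (-h)..0, (φ u - ψ u) ^ 2) + ∫ u in (-h)..0, (φ' u - ψ' u) ^ 2) := by
  have hK : 0 < K := lt_of_lt_of_le hε hεK
  have hhpos : 0 < h := hh ▸ div_pos hb hK
  have hh0 : -h ≤ 0 := by linarith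
  set A₀ := ∫ u in (-h)..0, (φ u - ψ u) ^ 2 with hA₀
  set A₁ := ∫ u in (-h)..0, (φ' u - ψ' u) ^ 2 with hA₁
  have hA₀nn : 0 ≤ A₀ := intervalIntegral.integral_nonneg hh0 (fun u _ => sq_nonneg _)
  have hA₁nn : 0 ≤ A₁ := intervalIntegral.integral_nonneg hh0 (fun u _ => sq_nonneg _)
  set N := Real.sqrt (A₀ + A₁) with hN
  have hNnn : 0 ≤ N := Real.sqrt_nonneg _
  have hsqh : 0 < Real.sqrt h := Real.sqrt_pos.mpr hhpos
  set C := (Real.sqrt h + (Real.sqrt h)⁻¹) * N with hC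
  have hCnn : 0 ≤ C := by positivity
  -- difference of prehistories
  set d : ℝ → ℝ := fun t => φ t - ψ t with hd
  set d' : ℝ → ℝ := fun t => φ' t - ψ' t with hd'
  have hdftc : ∀ s ∈ Icc (-h) 0, ∀ t ∈ Icc (-h) 0, d t = d s + ∫ u in s..t, d' u := by
    intro s hs t ht
    have hsub : uIcc s t ⊆ uIcc (-h) 0 := by
      rw [uIcc_of_le hh0]
      exact uIcc_subset_Icc hs ht
    have h1 : (∫ u in s..t, d' u) = (∫ u in s..t, φ' u) - ∫ u in s..t, ψ' u :=
      intervalIntegral.integral_sub (hφint.mono_set hsub) (hψint.mono_set hsub)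
    simp only [hd, hd']
    rw [h1, hφftc s hs t ht, hψftc s hs t ht]
    ring
  have hd'int : IntervalIntegrable d' volume (-h) 0 := hφint.sub hψint
  -- sup bound for d
  have supb : ∀ t ∈ Icc (-h) 0, |d t| ≤ C := by
    intro t ht
    have h1 := my_sob hhpos hdftc hd'int hφ2 hφ'2 t ht
    have h2 : Real.sqrt A₀ ≤ N := Real.sqrt_le_sqrt (by linarith)
    have h3 : Real.sqrt A₁ ≤ N := Real.sqrt_le_sqrt (by linarith)
    have h4 : (Real.sqrt h)⁻¹ * Real.sqrt A₀ + Real.sqrt h * Real.sqrt A₁ ≤ C := by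
      rw [hC]
      have i1 : (Real.sqrt h)⁻¹ * Real.sqrt A₀ ≤ (Real.sqrt h)⁻¹ * N :=
        mul_le_mul_of_nonneg_left h2 (by positivity)
      have i2 : Real.sqrt h * Real.sqrt A₁ ≤ Real.sqrt h * N :=
        mul_le_mul_of_nonneg_left h3 hsqh.le
      nlinarith [hsqh]
    exact le_trans h1 h4
  -- continuity of the prehistories and solutions
  have hφc : ContinuousOn φ (Icc (-h) 0) := cont_of_ftc hh0 hφftc hφint
  have hψc : ContinuousOn ψ (Icc (-h) 0) := cont_of_ftc hh0 hψftc hψint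
  have hdc : ContinuousOn d (Icc (-h) 0) := hφc.sub hψc
  have hyφc : ContinuousOn yφ (Icc 0 h) := fun s hs => (hyφ s hs).continuousWithinAt
  have hyψc : ContinuousOn yψ (Icc 0 h) := fun s hs => (hyψ s hs).continuousWithinAt
  -- g is continuous
  have hgc : Continuous (fun p : ℝ × ℝ => g p.1 p.2) := by
    refine (LipschitzWith.of_dist_le_mul (K := Real.toNNReal (2 * L))
      (fun p q => ?_)).continuous
    rw [Real.coe_toNNReal _ (by positivity), Prod.dist_eq, Real.dist_eq, Real.dist_eq,
      Real.dist_eq]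
    have h1 := hgLip p.1 p.2 q.1 q.2
    have h2 : |p.1 - q.1| ≤ max |p.1 - q.1| |p.2 - q.2| := le_max_left _ _
    have h3 : |p.2 - q.2| ≤ max |p.1 - q.1| |p.2 - q.2| := le_max_right _ _
    nlinarith [abs_nonneg (p.1 - q.1), abs_nonneg (p.2 - q.2)]
  -- continuity of the vector fields along solutions
  have hφnegc : ContinuousOn (fun s => φ (-s)) (Icc 0 h) := by
    refine hφc.comp continuous_neg.continuousOn (fun s hs => ?_)
    exact ⟨by linarith [hs.2], by linarith [hs.1]⟩
  have hψnegc : ContinuousOn (fun s => ψ (-s)) (Icc 0 h) := by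
    refine hψc.comp continuous_neg.continuousOn (fun s hs => ?_)
    exact ⟨by linarith [hs.2], by linarith [hs.1]⟩
  set Gφ : ℝ → ℝ := fun s => g (yφ s) (φ (-s)) with hGφ
  set Gψ : ℝ → ℝ := fun s => g (yψ s) (ψ (-s)) with hGψ
  have hGφc : ContinuousOn Gφ (Icc 0 h) := by
    have := hgc.comp_continuousOn (hyφc.prodMk hφnegc); exact this
  have hGψc : ContinuousOn Gψ (Icc 0 h) := by
    have := hgc.comp_continuousOn (hyψc.prodMk hψnegc); exact this
  -- fundamental theorem of calculus for the solutions
  have ftc : ∀ (y : ℝ → ℝ) (G : ℝ → ℝ), ContinuousOn y (Icc 0 h) → ContinuousOn G (Icc 0 h) →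
      (∀ s ∈ Icc (0 : ℝ) h, HasDerivWithinAt y (-(G s)) (Icc (0 : ℝ) h) s) →
      ∀ u v : ℝ, 0 ≤ u → u ≤ v → v ≤ h → (∫ s in u..v, G s) = y u - y v := by
    intro y G hyc hGc hyd u v hu huv hv
    have hsub : Icc u v ⊆ Icc 0 h := Icc_subset_Icc hu hv
    have key : (∫ s in u..v, -(G s)) = y v - y u := by
      refine intervalIntegral.integral_eq_sub_of_hasDeriv_right_of_le huv
        (hyc.mono hsub) (fun x hx => ?_) ?_
      · have hx' : x ∈ Ioo 0 h := ⟨lt_of_le_of_lt hu hx.1, lt_of_lt_of_le hx.2 hv⟩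
        exact ((hyd x (Ioo_subset_Icc_self hx')).hasDerivAt
          (Icc_mem_nhds hx'.1 hx'.2)).hasDerivWithinAt
      · exact ((hGc.mono hsub).neg).intervalIntegrable_of_Icc huv
    rw [intervalIntegral.integral_neg] at key
    linarith [key]
  -- Gronwall estimate for the difference of solutions
  set F : ℝ → ℝ := fun s => yφ s - yψ s with hF
  have hFc : ContinuousOn F (Icc 0 h) := hyφc.sub hyψc
  have hFd : ∀ x ∈ Ico (0:ℝ) h,
      HasDerivWithinAt F (-(Gφ x) - -(Gψ x)) (Ici x) x := by
    intro x hx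
    have hmem : Icc (0:ℝ) h ∈ nhdsWithin x (Ici x) :=
      mem_nhdsWithin.2 ⟨Iio h, isOpen_Iio, hx.2,
        fun y hy => ⟨le_trans hx.1 hy.2, le_of_lt hy.1⟩⟩
    exact HasDerivWithinAt.mono_of_mem_nhdsWithin ((hyφ x (Ico_subset_Icc_self hx)).sub
      (hyψ x (Ico_subset_Icc_self hx))) hmem
  have hbound : ∀ x ∈ Ico (0:ℝ) h, ‖-(Gφ x) - -(Gψ x)‖ ≤ L * ‖F x‖ + L * C := by
    intro x hx
    have hxI : x ∈ Icc (0:ℝ) h := Ico_subset_Icc_self hx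
    have hxneg : -x ∈ Icc (-h) 0 := ⟨by linarith [hxI.2], by linarith [hxI.1]⟩
    have h1 : |Gψ x - Gφ x| ≤ L * (|yψ x - yφ x| + |ψ (-x) - φ (-x)|) :=
      hgLip (yψ x) (ψ (-x)) (yφ x) (φ (-x))
    have h2 : |ψ (-x) - φ (-x)| = |d (-x)| := by
      rw [abs_sub_comm]
    have h3 : |yψ x - yφ x| = |F x| := by rw [abs_sub_comm]
    have h4 : |d (-x)| ≤ C := supb (-x) hxneg
    have h5 : ‖-(Gφ x) - -(Gψ x)‖ = |Gψ x - Gφ x| := by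
      rw [Real.norm_eq_abs, show -(Gφ x) - -(Gψ x) = Gψ x - Gφ x from by ring]
    rw [h5, Real.norm_eq_abs]
    rw [h2, h3] at h1
    nlinarith [abs_nonneg (F x)]
  have hF0 : ‖F 0‖ ≤ 0 := by simp [hF, hyφ0, hyψ0]
  have gr := norm_le_gronwallBound_of_norm_deriv_right_le hFc hFd hF0 hbound
  have ybound : ∀ s ∈ Icc (0:ℝ) h, |yφ s - yψ s| ≤ C * (L * s * Real.exp (L * s)) := by
    intro s hs
    have h1 := gr s hs
    rw [sub_zero, Real.norm_eq_abs] at h1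
    by_cases hL0 : L = 0
    · subst hL0
      rw [gronwallBound_K0] at h1
      simpa using h1
    · have hLpos : 0 < L := lt_of_le_of_ne hL (Ne.symm hL0)
      rw [gronwallBound_of_K_ne_0 hL0] at h1
      have h2 : L * C / L = C := by field_simp
      simp only [zero_mul, zero_add, h2] at h1
      have h3 : Real.exp (L * s) - 1 ≤ (L * s) * Real.exp (L * s) :=
        exp_sub_one_le (by nlinarith [hs.1])
      calc |yφ s - yψ s| ≤ C * (Real.exp (L * s) - 1) := h1
        _ ≤ C * ((L * s) * Real.exp (L * s)) := mul_le_mul_of_nonneg_left h3 hCnn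
        _ = C * (L * s * Real.exp (L * s)) := by ring
  -- main chain
  set J := ∫ t in (0:ℝ)..h, t * Real.exp (L * t) with hJ
  have ftcφ := ftc yφ Gφ hyφc hGφc hyφ
  have ftcψ := ftc yψ Gψ hyψc hGψc hyψ
  have e1 : ε * (τφ - τψ) ≤ ∫ s in τψ..τφ, Gφ s := by
    have hmono : (∫ _ in τψ..τφ, ε) ≤ ∫ s in τψ..τφ, Gφ s := by
      refine intervalIntegral.integral_mono_on hle intervalIntegrable_const
        ((hGφc.mono (Icc_subset_Icc hτψ.1 hτφ.2)).intervalIntegrable_of_Icc hle)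
        (fun s hs => ?_)
      have hsI : s ∈ Icc (0:ℝ) h := ⟨le_trans hτψ.1 hs.1, le_trans hs.2 hτφ.2⟩
      have hsneg : -s ∈ Icc (-h) 0 := ⟨by linarith [hsI.2], by linarith [hsI.1]⟩
      exact (hbd (yφ s) (hyφball s hsI) (φ (-s)) (hφI (-s) hsneg)).1
    rw [intervalIntegral.integral_const, smul_eq_mul, mul_comm] at hmono
    exact hmono
  have e2 : (∫ s in τψ..τφ, Gφ s) = yφ τψ - yφ τφ := ftcφ τψ τφ hτψ.1 hle hτφ.2
  have e4φ : (∫ s in (0:ℝ)..τψ, Gφ s) = x₂ - yφ τψ := by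
    have := ftcφ 0 τψ le_rfl hτψ.1 hτψ.2
    rwa [hyφ0] at this
  have e4ψ : (∫ s in (0:ℝ)..τψ, Gψ s) = x₂ - yψ τψ := by
    have := ftcψ 0 τψ le_rfl hτψ.1 hτψ.2
    rwa [hyψ0] at this
  have hdnegc : ContinuousOn (fun s => |d (-s)|) (Icc (0:ℝ) h) := by
    refine continuous_abs.comp_continuousOn
      (hdc.comp continuous_neg.continuousOn (fun s hs => ?_))
    exact ⟨by linarith [hs.2], by linarith [hs.1]⟩
  set Bnd : ℝ → ℝ := fun s => L ^ 2 * C * (s * Real.exp (L * s)) + L * |d (-s)| with hBnd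
  have hBndc : ContinuousOn Bnd (Icc (0:ℝ) h) := by
    refine ContinuousOn.add ?_ (continuousOn_const.mul hdnegc)
    exact (continuous_const.mul (continuous_id.mul
      (Real.continuous_exp.comp (continuous_const.mul continuous_id)))).continuousOn
  have e5 : (∫ s in (0:ℝ)..τψ, Gψ s) - (∫ s in (0:ℝ)..τψ, Gφ s) ≤
      ∫ s in (0:ℝ)..τψ, Bnd s := by
    have hiψ : IntervalIntegrable Gψ volume 0 τψ :=
      (hGψc.mono (Icc_subset_Icc le_rfl hτψ.2)).intervalIntegrable_of_Icc hτψ.1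
    have hiφ : IntervalIntegrable Gφ volume 0 τψ :=
      (hGφc.mono (Icc_subset_Icc le_rfl hτψ.2)).intervalIntegrable_of_Icc hτψ.1
    have hiB : IntervalIntegrable Bnd volume 0 τψ :=
      (hBndc.mono (Icc_subset_Icc le_rfl hτψ.2)).intervalIntegrable_of_Icc hτψ.1
    rw [← intervalIntegral.integral_sub hiψ hiφ]
    refine intervalIntegral.integral_mono_on hτψ.1 (hiψ.sub hiφ) hiB (fun s hs => ?_)
    have hsI : s ∈ Icc (0:ℝ) h := ⟨hs.1, le_trans hs.2 hτψ.2⟩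
    have h1 : |Gψ s - Gφ s| ≤ L * (|yψ s - yφ s| + |ψ (-s) - φ (-s)|) :=
      hgLip (yψ s) (ψ (-s)) (yφ s) (φ (-s))
    have h2 : |ψ (-s) - φ (-s)| = |d (-s)| := by rw [abs_sub_comm]
    have h3 : |yψ s - yφ s| = |yφ s - yψ s| := abs_sub_comm _ _
    have hy := ybound s hsI
    calc Gψ s - Gφ s ≤ |Gψ s - Gφ s| := le_abs_self _
      _ ≤ L * (|yψ s - yφ s| + |ψ (-s) - φ (-s)|) := h1
      _ = L * (|yφ s - yψ s| + |d (-s)|) := by rw [h2, h3]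
      _ ≤ L * (C * (L * s * Real.exp (L * s)) + |d (-s)|) :=
          mul_le_mul_of_nonneg_left (add_le_add_left hy _) hL
      _ = Bnd s := by simp only [hBnd]; ring
  have e6 : (∫ s in (0:ℝ)..τψ, Bnd s) =
      L ^ 2 * C * (∫ s in (0:ℝ)..τψ, s * Real.exp (L * s)) +
        L * ∫ s in (0:ℝ)..τψ, |d (-s)| := by
    have hi1 : IntervalIntegrable (fun s => L ^ 2 * C * (s * Real.exp (L * s))) volume 0 τψ :=
      ((continuous_const.mul (continuous_id.mul
        (Real.continuous_exp.comp (continuous_const.mul continuous_id)))).intervalIntegrable _ _)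
    have hi2 : IntervalIntegrable (fun s => L * |d (-s)|) volume 0 τψ :=
      ((continuousOn_const.mul hdnegc).mono (Icc_subset_Icc le_rfl hτψ.2)).intervalIntegrable_of_Icc hτψ.1
    rw [intervalIntegral.integral_add hi1 hi2, intervalIntegral.integral_const_mul,
      intervalIntegral.integral_const_mul]
  have e7 : (∫ s in (0:ℝ)..τψ, s * Real.exp (L * s)) ≤ J := by
    refine intervalIntegral.integral_mono_interval le_rfl hτψ.1 hτψ.2 ?_ ?_
    · refine (ae_restrict_iff' measurableSet_Ioc).mpr (Filter.Eventually.of_forall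
        (fun s hs => ?_))
      exact mul_nonneg hs.1.le (Real.exp_pos _).le
    · exact (continuous_id.mul
        (Real.continuous_exp.comp (continuous_const.mul continuous_id))).intervalIntegrable _ _
  have e8 : (∫ s in (0:ℝ)..τψ, |d (-s)|) ≤ Real.sqrt h * Real.sqrt A₀ := by
    have hidh : IntervalIntegrable (fun s => |d (-s)|) volume 0 h :=
      hdnegc.intervalIntegrable_of_Icc hhpos.le
    have s1 : (∫ s in (0:ℝ)..τψ, |d (-s)|) ≤ ∫ s in (0:ℝ)..h, |d (-s)| := by
      refine intervalIntegral.integral_mono_interval le_rfl hτψ.1 hτψ.2 ?_ hidh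
      exact (ae_restrict_iff' measurableSet_Ioc).mpr (Filter.Eventually.of_forall
        (fun s _ => abs_nonneg _))
    have s2 : (∫ s in (0:ℝ)..h, |d (-s)|) = ∫ u in (-h)..0, |d u| := by
      have := intervalIntegral.integral_comp_neg (a := (0:ℝ)) (b := h) (f := fun u => |d u|)
      rwa [neg_zero] at this
    have s3 : (∫ u in (-h)..0, |d u|) ≤ Real.sqrt (0 - -h) * Real.sqrt (∫ u in (-h)..0, d u ^ 2) :=
      my_cs hh0 (hdc.intervalIntegrable_of_Icc hh0) hφ2
    have e : (0:ℝ) - -h = h := by ring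
    rw [e] at s3
    have s4 : (∫ u in (-h)..0, d u ^ 2) = A₀ := rfl
    rw [s4] at s3
    linarith [s1, s2.le, s2.ge, s3]
  -- assemble
  have hJnn : 0 ≤ J := by
    refine intervalIntegral.integral_nonneg hhpos.le (fun t ht => ?_)
    exact mul_nonneg ht.1 (Real.exp_pos _).le
  have m7 : L ^ 2 * C * (∫ s in (0:ℝ)..τψ, s * Real.exp (L * s)) ≤ L ^ 2 * C * J :=
    mul_le_mul_of_nonneg_left e7 (mul_nonneg (sq_nonneg L) hCnn)
  have m8 : L * (∫ s in (0:ℝ)..τψ, |d (-s)|) ≤ L * (Real.sqrt h * Real.sqrt A₀) :=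
    mul_le_mul_of_nonneg_left e8 hL
  have hA₀N : Real.sqrt A₀ ≤ N := Real.sqrt_le_sqrt (by linarith)
  have m9 : L * (Real.sqrt h * Real.sqrt A₀) ≤ L * Real.sqrt h * N := by
    nlinarith [mul_nonneg hL hsqh.le]
  have final : L ^ 2 * C * J + L * Real.sqrt h * N =
      (L ^ 2 * (Real.sqrt h + (Real.sqrt h)⁻¹) * J + L * Real.sqrt h) * N := by
    rw [hC]; ring
  have chain : ε * (τφ - τψ) ≤ L ^ 2 * C * J + L * Real.sqrt h * N := by
    have d1 : yφ τψ - yφ τφ = yφ τψ - yψ τψ := by rw [hτφx, hτψx]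
    have d2 : yφ τψ - yψ τψ = (∫ s in (0:ℝ)..τψ, Gψ s) - ∫ s in (0:ℝ)..τψ, Gφ s := by
      rw [e4φ, e4ψ]; ring
    linarith [e1, e2.le, e2.ge, e5, e6.le, e6.ge, m7, m8, m9]
  rw [← final]
  exact chain

/-- Lemma 3.8: the delay function `τ : H^1(-h,0;ℝ) → [0,h]`, defined implicitly by
`y_φ(τ(φ)) = x₁`, is Lipschitz continuous with respect to the `H^1` norm:
`ε |τ(φ) - τ(ψ)| ≤ (L²(h^{1/2}+h^{-1/2}) ∫₀^h t e^{Lt} dt + L√h) ‖φ-ψ‖_{H^1}`. -/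
theorem tau_lipschitz
    (I : Set ℝ) (hIopen : IsOpen I)
    (x₁ x₂ b ε K L h : ℝ) (hh : h = b / K) (hb : 0 < b)
    (hε : 0 < ε) (hεK : ε ≤ K) (hL : 0 ≤ L)
    (hgap : x₂ - x₁ ∈ Ioo 0 (b / K * ε))
    (g : ℝ → ℝ → ℝ)
    (hgLip : ∀ x z x' z', |g x z - g x' z'| ≤ L * (|x - x'| + |z - z'|))
    (hbd : ∀ x ∈ Metric.closedBall x₂ b, ∀ z ∈ I, ε ≤ g x z ∧ g x z ≤ K)
    -- prehistories `φ, ψ ∈ H^1(-h,0;ℝ)` with values in `I`, given by their continuous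
    -- representatives together with their (weak) derivatives
    (φ φ' ψ ψ' : ℝ → ℝ)
    (hφftc : ∀ s ∈ Icc (-h) 0, ∀ t ∈ Icc (-h) 0, φ t = φ s + ∫ u in s..t, φ' u)
    (hψftc : ∀ s ∈ Icc (-h) 0, ∀ t ∈ Icc (-h) 0, ψ t = ψ s + ∫ u in s..t, ψ' u)
    (hφint : IntervalIntegrable φ' volume (-h) 0)
    (hψint : IntervalIntegrable ψ' volume (-h) 0)
    (hφ2 : IntervalIntegrable (fun t => (φ t - ψ t) ^ 2) volume (-h) 0)
    (hφ'2 : IntervalIntegrable (fun t => (φ' t - ψ' t) ^ 2) volume (-h) 0)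
    (hφI : ∀ t ∈ Icc (-h) 0, φ t ∈ I) (hψI : ∀ t ∈ Icc (-h) 0, ψ t ∈ I)
    -- the associated solutions of `y' = -g(y(s), ·(-s))`, `y(0) = x₂`
    (yφ yψ : ℝ → ℝ) (hyφ0 : yφ 0 = x₂) (hyψ0 : yψ 0 = x₂)
    (hyφball : ∀ s ∈ Icc (0 : ℝ) h, yφ s ∈ Metric.closedBall x₂ b)
    (hyψball : ∀ s ∈ Icc (0 : ℝ) h, yψ s ∈ Metric.closedBall x₂ b)
    (hyφ : ∀ s ∈ Icc (0 : ℝ) h, HasDerivWithinAt yφ (-(g (yφ s) (φ (-s)))) (Icc (0 : ℝ) h) s)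
    (hyψ : ∀ s ∈ Icc (0 : ℝ) h, HasDerivWithinAt yψ (-(g (yψ s) (ψ (-s)))) (Icc (0 : ℝ) h) s)
    -- the delays defined by `y_φ(τ(φ)) = x₁`
    (τφ τψ : ℝ) (hτφ : τφ ∈ Icc (0 : ℝ) h) (hτψ : τψ ∈ Icc (0 : ℝ) h)
    (hτφx : yφ τφ = x₁) (hτψx : yψ τψ = x₁) :
    ε * |τφ - τψ| ≤
      (L ^ 2 * (Real.sqrt h + (Real.sqrt h)⁻¹) * (∫ t in (0 : ℝ)..h, t * Real.exp (L * t)) +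
          L * Real.sqrt h) *
        Real.sqrt ((∫ u in (-h)..0, (φ u - ψ u) ^ 2) + ∫ u in (-h)..0, (φ' u - ψ' u) ^ 2) := by
  rcases le_total τψ τφ with hle | hle
  · rw [abs_of_nonneg (sub_nonneg.2 hle)]
    exact tau_key I x₁ x₂ b ε K L h hh hb hε hεK hL g hgLip hbd φ φ' ψ ψ' hφftc hψftc
      hφint hψint hφ2 hφ'2 hφI hψI yφ yψ hyφ0 hyψ0 hyφball hyψball hyφ hyψ τφ τψ hτφ hτψ
      hτφx hτψx hle
  · rw [abs_sub_comm, abs_of_nonneg (sub_nonneg.2 hle)]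
    have hs1 : (fun t => (ψ t - φ t) ^ 2) = (fun t => (φ t - ψ t) ^ 2) := by
      funext t; ring
    have hs2 : (fun t => (ψ' t - φ' t) ^ 2) = (fun t => (φ' t - ψ' t) ^ 2) := by
      funext t; ring
    have := tau_key I x₁ x₂ b ε K L h hh hb hε hεK hL g hgLip hbd ψ ψ' φ φ' hψftc hφftc
      hψint hφint (hs1 ▸ hφ2) (hs2 ▸ hφ'2) hψI hφI yψ yφ hyψ0 hyφ0 hyψball hyφball hyψ hyφ
      τψ τφ hτψ hτφ hτψx hτφx hle
    simpa only [hs1, hs2] using this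
end

section
/- For every α > 0, the composition φ ↦ φ(-τ(φ)) mapping H^1(-h,0;ℝ) ∩ V_α to ℝ is Lipschitz continuous, being the composition of the Lipschitz evaluation map on V_α × [-h,0] with the Lipschitz map φ ↦ (φ, -τ(φ)). -/
open MeasureTheory Set

section Helpers
open Real

/-- Cauchy–Schwarz for interval integrals via AM-GM scaling trick. -/
lemma cs_helper {f : ℝ → ℝ} {a b : ℝ} (hab : a ≤ b)
    (hf : IntervalIntegrable f volume a b)
    (hf2 : IntervalIntegrable (fun t => f t ^ 2) volume a b) :
    (∫ t in a..b, |f t|) ≤ Real.sqrt (b - a) * Real.sqrt (∫ t in a..b, f t ^ 2) := by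
  set B := ∫ t in a..b, f t ^ 2 with hB
  have hB0 : 0 ≤ B := intervalIntegral.integral_nonneg hab (fun x _ => sq_nonneg _)
  have key : ∀ l : ℝ, 0 < l → (∫ t in a..b, |f t|) ≤ (l * B + (b - a) / l) / 2 := by
    intro l hl
    have hpt : ∀ x ∈ Icc a b, |f x| ≤ (l * f x ^ 2 + 1 / l) / 2 := by
      intro x _
      rw [le_div_iff₀ (by norm_num : (0:ℝ) < 2), ← mul_le_mul_iff_of_pos_right hl]
      have hrhs : (l * f x ^ 2 + 1 / l) * l = l ^ 2 * f x ^ 2 + 1 := by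
        field_simp
      rw [hrhs]
      nlinarith [sq_nonneg (l * |f x| - 1), sq_abs (f x)]
    have hmono := intervalIntegral.integral_mono_on hab hf.abs
      (((hf2.const_mul l).add (intervalIntegrable_const (c := 1 / l))).div_const 2)
      (fun x hx => hpt x hx)
    have heq : (∫ t in a..b, (l * f t ^ 2 + 1 / l) / 2) = (l * B + (b - a) / l) / 2 := by
      rw [intervalIntegral.integral_div,
        intervalIntegral.integral_add (hf2.const_mul l) intervalIntegrable_const,
        intervalIntegral.integral_const_mul, intervalIntegral.integral_const]
      rw [smul_eq_mul]
      ring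
    rw [heq] at hmono
    exact hmono
  rcases eq_or_lt_of_le hab with hba | hba
  · subst hba
    simp
  · rcases eq_or_lt_of_le hB0 with h0 | hpos
    · -- B = 0
      have hJ0 : (∫ t in a..b, |f t|) ≤ 0 := by
        by_contra hc
        push_neg at hc
        set J := ∫ t in a..b, |f t| with hJ
        have hba' : 0 < b - a := by linarith
        have hlp : 0 < (b - a) / J + 1 := by
          have := div_pos hba' hc; linarith
        have hk := key ((b - a) / J + 1) hlp
        rw [← h0] at hk
        have hEq : J * ((b - a) / J + 1) = (b - a) + J := by
          field_simp
        have h1 : (b - a) / ((b - a) / J + 1) < J := by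
          rw [div_lt_iff₀ (by positivity)]
          linarith
        rw [mul_zero, zero_add] at hk
        linarith
      have : 0 ≤ Real.sqrt (b - a) * Real.sqrt B := by positivity
      linarith
    · set l := Real.sqrt (b - a) / Real.sqrt B with hldef
      have hsB : 0 < Real.sqrt B := Real.sqrt_pos.mpr hpos
      have hsba : 0 < Real.sqrt (b - a) := Real.sqrt_pos.mpr (by linarith)
      have hlpos : 0 < l := by positivity
      have hBs : Real.sqrt B * Real.sqrt B = B := Real.mul_self_sqrt hpos.le
      have hbas : Real.sqrt (b - a) * Real.sqrt (b - a) = b - a :=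
        Real.mul_self_sqrt (by linarith)
      have heq : (l * B + (b - a) / l) / 2 = Real.sqrt (b - a) * Real.sqrt B := by
        rw [hldef]
        field_simp
        nlinarith [hBs, hbas]
      have := key l hlpos
      rw [heq] at this
      exact this


lemma gb_helper {L c t h : ℝ} (hL : 0 ≤ L) (hc : 0 ≤ c) (ht : 0 ≤ t) (hth : t ≤ h) :
    gronwallBound 0 L c t ≤ c * h * Real.exp (L * h) := by
  have hh0 : 0 ≤ h := ht.trans hth
  rcases eq_or_ne L 0 with h0 | h0
  · subst h0
    rw [gronwallBound_K0]
    simp only [zero_add, zero_mul, Real.exp_zero, mul_one]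
    exact mul_le_mul_of_nonneg_left hth hc
  · have hLpos : 0 < L := lt_of_le_of_ne hL (Ne.symm h0)
    rw [gronwallBound_of_K_ne_0 h0]
    simp only [zero_mul, zero_add]
    have key : Real.exp (L * t) - 1 ≤ L * t * Real.exp (L * t) := by
      have h1 := Real.add_one_le_exp (-(L*t))
      have h2 : Real.exp (-(L*t)) * Real.exp (L*t) = 1 := by
        rw [← Real.exp_add]; simp
      nlinarith [Real.exp_pos (L*t)]
    have key2 : L * t * Real.exp (L * t) ≤ L * h * Real.exp (L * h) := by
      apply mul_le_mul (mul_le_mul_of_nonneg_left hth hL)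
        (Real.exp_le_exp.mpr (mul_le_mul_of_nonneg_left hth hL))
        (Real.exp_pos _).le (mul_nonneg hL hh0)
    calc c / L * (Real.exp (L*t) - 1) ≤ c / L * (L * h * Real.exp (L * h)) := by
          apply mul_le_mul_of_nonneg_left (key.trans key2) (by positivity)
      _ = c * h * Real.exp (L * h) := by field_simp

lemma sqrt_add_le_helper {A B : ℝ} (hA : 0 ≤ A) (hB : 0 ≤ B) :
    Real.sqrt A + Real.sqrt B ≤ Real.sqrt 2 * Real.sqrt (A + B) := by
  have h1 : (Real.sqrt A + Real.sqrt B)^2 ≤ 2*(A+B) := by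
    nlinarith [Real.sq_sqrt hA, Real.sq_sqrt hB, Real.sqrt_nonneg A, Real.sqrt_nonneg B,
      sq_nonneg (Real.sqrt A - Real.sqrt B)]
  calc Real.sqrt A + Real.sqrt B = Real.sqrt ((Real.sqrt A + Real.sqrt B)^2) :=
        (Real.sqrt_sq (by positivity)).symm
    _ ≤ Real.sqrt (2*(A+B)) := Real.sqrt_le_sqrt h1
    _ = Real.sqrt 2 * Real.sqrt (A+B) := Real.sqrt_mul (by norm_num) _

lemma sup_bound {φ φ' ψ ψ' : ℝ → ℝ} {h : ℝ} (hh : 0 < h)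
    (hφrep : ∀ s ∈ Icc (-h) 0, ∀ t ∈ Icc (-h) 0, φ t = φ s + ∫ u in s..t, φ' u)
    (hψrep : ∀ s ∈ Icc (-h) 0, ∀ t ∈ Icc (-h) 0, ψ t = ψ s + ∫ u in s..t, ψ' u)
    (hφ' : IntervalIntegrable φ' volume (-h) 0)
    (hψ' : IntervalIntegrable ψ' volume (-h) 0)
    (hd2 : IntervalIntegrable (fun t => (φ t - ψ t) ^ 2) volume (-h) 0)
    (hd'2 : IntervalIntegrable (fun t => (φ' t - ψ' t) ^ 2) volume (-h) 0) :
    ∀ t ∈ Icc (-h) 0, |φ t - ψ t| ≤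
      Real.sqrt (∫ u in (-h)..0, (φ u - ψ u) ^ 2) / Real.sqrt h +
        Real.sqrt h * Real.sqrt (∫ u in (-h)..0, (φ' u - ψ' u) ^ 2) := by
  have hab : (-h : ℝ) ≤ 0 := by linarith
  have huIcc : uIcc (-h) (0:ℝ) = Icc (-h) 0 := uIcc_of_le hab
  set d : ℝ → ℝ := fun t => φ t - ψ t with hd
  set A := ∫ u in (-h)..0, (φ u - ψ u) ^ 2 with hA
  set B := ∫ u in (-h)..0, (φ' u - ψ' u) ^ 2 with hBdef
  have hA0 : 0 ≤ A := intervalIntegral.integral_nonneg hab (fun x _ => sq_nonneg _)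
  have hB0 : 0 ≤ B := intervalIntegral.integral_nonneg hab (fun x _ => sq_nonneg _)
  have hmh : (-h) ∈ Icc (-h) (0:ℝ) := ⟨le_refl _, hab⟩
  -- continuity of φ and ψ on Icc (-h) 0
  have contφ : ContinuousOn φ (Icc (-h) 0) := by
    have hC : ContinuousOn (fun t => φ (-h) + ∫ u in (-h)..t, φ' u) (Icc (-h) 0) :=
      continuousOn_const.add (by
        have := intervalIntegral.continuousOn_primitive_interval' hφ'
          (a := -h) (by rw [huIcc]; exact hmh)
        rwa [huIcc] at this)
    exact hC.congr fun t ht => hφrep (-h) hmh t ht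
  have contψ : ContinuousOn ψ (Icc (-h) 0) := by
    have hC : ContinuousOn (fun t => ψ (-h) + ∫ u in (-h)..t, ψ' u) (Icc (-h) 0) :=
      continuousOn_const.add (by
        have := intervalIntegral.continuousOn_primitive_interval' hψ'
          (a := -h) (by rw [huIcc]; exact hmh)
        rwa [huIcc] at this)
    exact hC.congr fun t ht => hψrep (-h) hmh t ht
  have contd : ContinuousOn d (Icc (-h) 0) := contφ.sub contψ
  -- minimum of d^2
  obtain ⟨s₀, hs₀, hmin⟩ := isCompact_Icc.exists_isMinOn (f := fun s => d s ^ 2)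
    ⟨(-h), hmh⟩ (contd.pow 2)
  have hs₀sq : d s₀ ^ 2 * (0 - -h) ≤ A := by
    have := intervalIntegral.integral_mono_on hab
      (intervalIntegrable_const (c := d s₀ ^ 2)) hd2
      (fun x hx => isMinOn_iff.mp hmin x hx)
    rw [intervalIntegral.integral_const, smul_eq_mul, mul_comm] at this
    rw [hA]; exact this
  have hds₀ : |d s₀| ≤ Real.sqrt A / Real.sqrt h := by
    have h1 : d s₀ ^ 2 ≤ A / h := by
      rw [le_div_iff₀ hh]; nlinarith [hs₀sq]
    calc |d s₀| = Real.sqrt (d s₀ ^ 2) := (Real.sqrt_sq_eq_abs _).symm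
      _ ≤ Real.sqrt (A / h) := Real.sqrt_le_sqrt h1
      _ = Real.sqrt A / Real.sqrt h := Real.sqrt_div hA0 h
  -- L¹ bound on d'
  have hI' : (∫ u in (-h)..0, |φ' u - ψ' u|) ≤ Real.sqrt h * Real.sqrt B := by
    have := cs_helper (f := fun u => φ' u - ψ' u) hab (hφ'.sub hψ') hd'2
    rw [show (0 : ℝ) - (-h) = h by ring] at this
    exact this
  intro t ht
  -- representation
  have hsub : uIcc s₀ t ⊆ uIcc (-h) 0 := by
    rw [huIcc]; exact uIcc_subset_Icc hs₀ ht
  have hrep : d t = d s₀ + ∫ u in s₀..t, (φ' u - ψ' u) := by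
    have h1 := hφrep s₀ hs₀ t ht
    have h2 := hψrep s₀ hs₀ t ht
    have h3 : (∫ u in s₀..t, (φ' u - ψ' u)) =
        (∫ u in s₀..t, φ' u) - ∫ u in s₀..t, ψ' u :=
      intervalIntegral.integral_sub (hφ'.mono_set hsub) (hψ'.mono_set hsub)
    simp only [hd]
    rw [h1, h2, h3]; ring
  have hioc : uIoc s₀ t ⊆ uIoc (-h) (0:ℝ) := by
    intro x hx
    rw [uIoc_of_le hab]
    rcases mem_uIoc.mp hx with ⟨h1, h2⟩ | ⟨h1, h2⟩
    · exact ⟨lt_of_le_of_lt hs₀.1 h1, h2.trans ht.2⟩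
    · exact ⟨lt_of_le_of_lt ht.1 h1, h2.trans hs₀.2⟩
  have hint : |∫ u in s₀..t, (φ' u - ψ' u)| ≤ ∫ u in (-h)..0, |φ' u - ψ' u| := by
    have h1 : |∫ u in s₀..t, (φ' u - ψ' u)| ≤ abs (∫ u in s₀..t, |φ' u - ψ' u|) := by
      have h0 : ‖∫ u in s₀..t, (φ' u - ψ' u)‖ ≤ abs (∫ u in s₀..t, ‖φ' u - ψ' u‖) :=
        intervalIntegral.norm_integral_le_abs_integral_norm
      simpa [Real.norm_eq_abs] using h0
    have h2 : abs (∫ u in s₀..t, |φ' u - ψ' u|) ≤ abs (∫ u in (-h)..0, |φ' u - ψ' u|) :=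
      intervalIntegral.abs_integral_mono_interval hioc
        (Filter.Eventually.of_forall fun x => abs_nonneg _) (hφ'.sub hψ').abs
    have h3 : abs (∫ u in (-h)..0, |φ' u - ψ' u|) = ∫ u in (-h)..0, |φ' u - ψ' u| :=
      abs_of_nonneg (intervalIntegral.integral_nonneg hab fun x _ => abs_nonneg _)
    linarith
  calc |φ t - ψ t| = |d t| := rfl
    _ ≤ |d s₀| + |∫ u in s₀..t, (φ' u - ψ' u)| := by
        rw [hrep]; exact abs_add_le _ _
    _ ≤ Real.sqrt A / Real.sqrt h + Real.sqrt h * Real.sqrt B := by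
        have := hint.trans hI'
        linarith

end Helpers

/-- Corollary 3.9: for every `α > 0` the map `φ ↦ φ(-τ(φ))` is Lipschitz continuous on
`H^1(-h,0;ℝ) ∩ V_α` with respect to the `H^1` norm, where `τ` is the delay defined by
`y_φ(τ(φ)) = x₁` for the solution `y_φ` of `y' = -g(y(s),φ(-s))`, `y(0) = x₂`. -/

theorem eval_tau_lipschitz
    (I : Set ℝ) (hIopen : IsOpen I)
    (x₁ x₂ b ε K L h α : ℝ) (hh : h = b / K) (hb : 0 < b) (hα : 0 < α)
    (hε : 0 < ε) (hεK : ε ≤ K) (hL : 0 ≤ L)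
    (hgap : x₂ - x₁ ∈ Ioo 0 (b / K * ε))
    (g : ℝ → ℝ → ℝ)
    (hgLip : ∀ x z x' z', |g x z - g x' z'| ≤ L * (|x - x'| + |z - z'|))
    (hbd : ∀ x ∈ Metric.closedBall x₂ b, ∀ z ∈ I, ε ≤ g x z ∧ g x z ≤ K) :
    ∃ C : ℝ, ∀ φ φ' ψ ψ' : ℝ → ℝ,
      (∀ s ∈ Icc (-h) 0, ∀ t ∈ Icc (-h) 0, φ t = φ s + ∫ u in s..t, φ' u) →
      (∀ s ∈ Icc (-h) 0, ∀ t ∈ Icc (-h) 0, ψ t = ψ s + ∫ u in s..t, ψ' u) →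
      IntervalIntegrable φ' volume (-h) 0 →
      IntervalIntegrable ψ' volume (-h) 0 →
      IntervalIntegrable (fun t => (φ t - ψ t) ^ 2) volume (-h) 0 →
      IntervalIntegrable (fun t => (φ' t - ψ' t) ^ 2) volume (-h) 0 →
      (∀ t ∈ Icc (-h) 0, φ t ∈ I) → (∀ t ∈ Icc (-h) 0, ψ t ∈ I) →
      -- `φ, ψ ∈ V_α`:
      (∀ᵐ t ∂(volume.restrict (Ioo (-h) 0)), |φ' t| ≤ α) →
      (∀ᵐ t ∂(volume.restrict (Ioo (-h) 0)), |ψ' t| ≤ α) →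
      ∀ yφ yψ : ℝ → ℝ, yφ 0 = x₂ → yψ 0 = x₂ →
      (∀ s ∈ Icc (0 : ℝ) h, yφ s ∈ Metric.closedBall x₂ b) →
      (∀ s ∈ Icc (0 : ℝ) h, yψ s ∈ Metric.closedBall x₂ b) →
      (∀ s ∈ Icc (0 : ℝ) h, HasDerivWithinAt yφ (-(g (yφ s) (φ (-s)))) (Icc (0 : ℝ) h) s) →
      (∀ s ∈ Icc (0 : ℝ) h, HasDerivWithinAt yψ (-(g (yψ s) (ψ (-s)))) (Icc (0 : ℝ) h) s) →
      ∀ τφ τψ : ℝ, τφ ∈ Icc (0 : ℝ) h → τψ ∈ Icc (0 : ℝ) h →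
      yφ τφ = x₁ → yψ τψ = x₁ →
      |φ (-τφ) - ψ (-τψ)| ≤
        C * Real.sqrt ((∫ u in (-h)..0, (φ u - ψ u) ^ 2) +
            ∫ u in (-h)..0, (φ' u - ψ' u) ^ 2) := by
  have hK : 0 < K := hε.trans_le hεK
  have hhpos : 0 < h := hh ▸ div_pos hb hK
  refine ⟨(1 + α * L * h * Real.exp (L * h) / ε) *
      ((1 / Real.sqrt h + Real.sqrt h) * Real.sqrt 2), ?_⟩
  intro φ φ' ψ ψ' hφrep hψrep hφ' hψ' hd2 hd'2 hφI hψI hφα hψα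
    yφ yψ hyφ0 hyψ0 hyφb hyψb hyφd hyψd τφ τψ hτφ hτψ hyφτ hyψτ
  set A := ∫ u in (-h)..0, (φ u - ψ u) ^ 2 with hAdef
  set B := ∫ u in (-h)..0, (φ' u - ψ' u) ^ 2 with hBdef
  have hab : (-h : ℝ) ≤ 0 := by linarith
  have hA0 : 0 ≤ A := intervalIntegral.integral_nonneg hab (fun x _ => sq_nonneg _)
  have hB0 : 0 ≤ B := intervalIntegral.integral_nonneg hab (fun x _ => sq_nonneg _)
  set M := Real.sqrt A / Real.sqrt h + Real.sqrt h * Real.sqrt B with hMdef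
  have hM := sup_bound hhpos hφrep hψrep hφ' hψ' hd2 hd'2
  have hM0 : 0 ≤ M := by positivity
  have hmem : ∀ τ : ℝ, τ ∈ Icc (0:ℝ) h → -τ ∈ Icc (-h) (0:ℝ) := by
    intro τ hτ
    exact ⟨by linarith [hτ.2], by linarith [hτ.1]⟩
  have hMb : ∀ s ∈ Icc (0:ℝ) h, |φ (-s) - ψ (-s)| ≤ M := by
    intro s hs
    exact hM (-s) (hmem s hs)
  -- Gronwall estimate on yφ - yψ
  have hgron : ∀ s ∈ Icc (0:ℝ) h, |yφ s - yψ s| ≤ L * M * h * Real.exp (L * h) := by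
    intro s hs
    have hfc : ContinuousOn (fun s => yφ s - yψ s) (Icc (0:ℝ) h) := fun u hu =>
      ((hyφd u hu).continuousWithinAt.sub (hyψd u hu).continuousWithinAt)
    have hfd : ∀ t ∈ Ico (0:ℝ) h, HasDerivWithinAt (fun s => yφ s - yψ s)
        ((fun t => -(g (yφ t) (φ (-t))) - (-(g (yψ t) (ψ (-t))))) t) (Ici t) t := by
      intro t ht
      exact ((hyφd t (Ico_subset_Icc_self ht)).sub
        (hyψd t (Ico_subset_Icc_self ht))).mono_of_mem_nhdsWithin (Icc_mem_nhdsGE_of_mem ht)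
    have ha0 : ‖yφ 0 - yψ 0‖ ≤ 0 := by
      rw [hyφ0, hyψ0]; simp
    have hbound : ∀ t ∈ Ico (0:ℝ) h,
        ‖(fun t => -(g (yφ t) (φ (-t))) - (-(g (yψ t) (ψ (-t))))) t‖ ≤
          L * ‖yφ t - yψ t‖ + L * M := by
      intro t ht
      beta_reduce
      have ht' := Ico_subset_Icc_self ht
      have h1 := hgLip (yψ t) (ψ (-t)) (yφ t) (φ (-t))
      have h2 := hMb t ht'
      have h3 : |ψ (-t) - φ (-t)| ≤ M := by rw [abs_sub_comm]; exact h2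
      have h4 : (-(g (yφ t) (φ (-t))) - (-(g (yψ t) (ψ (-t))))) =
          g (yψ t) (ψ (-t)) - g (yφ t) (φ (-t)) := by ring
      simp only [Real.norm_eq_abs]
      rw [h4]
      have h5 : |yψ t - yφ t| = |yφ t - yψ t| := abs_sub_comm _ _
      nlinarith [mul_nonneg hL (sub_nonneg.mpr h3), abs_nonneg (yφ t - yψ t)]
    have := norm_le_gronwallBound_of_norm_deriv_right_le hfc hfd ha0 hbound s hs
    rw [Real.norm_eq_abs, sub_zero] at this
    exact this.trans (gb_helper hL (mul_nonneg hL hM0) hs.1 hs.2)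
  -- antitonicity of s ↦ y s + ε s
  have hanti : ∀ (y : ℝ → ℝ) (w : ℝ → ℝ),
      (∀ s ∈ Icc (0:ℝ) h, HasDerivWithinAt y (-(g (y s) (w (-s)))) (Icc (0:ℝ) h) s) →
      (∀ s ∈ Icc (0:ℝ) h, y s ∈ Metric.closedBall x₂ b) →
      (∀ t ∈ Icc (-h) 0, w t ∈ I) →
      AntitoneOn (fun s => y s + ε * s) (Icc (0:ℝ) h) := by
    intro y w hyd hyb hwI
    apply antitoneOn_of_hasDerivWithinAt_nonpos (convex_Icc _ _)
      (f' := fun s => -(g (y s) (w (-s))) + ε)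
    · exact fun s hs => (hyd s hs).continuousWithinAt.add
        ((continuous_const.mul continuous_id).continuousWithinAt)
    · intro x hx
      rw [interior_Icc] at hx ⊢
      have hx' := Ioo_subset_Icc_self hx
      have hεd : HasDerivWithinAt (fun s : ℝ => ε * s) ε (Ioo (0:ℝ) h) x := by
        simpa using ((hasDerivAt_id x).const_mul ε).hasDerivWithinAt
      exact ((hyd x hx').mono Ioo_subset_Icc_self).add hεd
    · intro x hx
      rw [interior_Icc] at hx
      have hx' := Ioo_subset_Icc_self hx
      have := (hbd (y x) (hyb x hx') (w (-x)) (hwI (-x) (hmem x hx'))).1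
      linarith
  set Δ := L * M * h * Real.exp (L * h) with hΔdef
  have hΔ0 : 0 ≤ Δ := by positivity
  -- delay estimate
  have hτ : |τφ - τψ| ≤ Δ / ε := by
    rcases le_total τφ τψ with hle | hle
    · have hA := hanti yφ φ hyφd hyφb hφI hτφ hτψ hle
      simp only at hA
      have h1 : ε * (τψ - τφ) ≤ yφ τφ - yφ τψ := by linarith
      have h2 := hgron τψ hτψ
      have h3 : yφ τψ - yψ τψ ≥ -Δ := by
        have := abs_le.mp h2
        linarith [this.1]
      rw [abs_of_nonpos (by linarith), le_div_iff₀ hε]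
      rw [hyφτ, hyψτ] at *
      nlinarith
    · have hA := hanti yψ ψ hyψd hyψb hψI hτψ hτφ hle
      simp only at hA
      have h1 : ε * (τφ - τψ) ≤ yψ τψ - yψ τφ := by linarith
      have h2 := hgron τφ hτφ
      have h3 : yφ τφ - yψ τφ ≤ Δ := (abs_le.mp h2).2
      rw [abs_of_nonneg (by linarith), le_div_iff₀ hε]
      rw [hyφτ, hyψτ] at *
      nlinarith
  -- step 1 : |φ(-τφ) - φ(-τψ)| ≤ α * |τφ - τψ|
  have hstep1 : |φ (-τφ) - φ (-τψ)| ≤ α * |τφ - τψ| := by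
    have hrep := hφrep (-τψ) (hmem τψ hτψ) (-τφ) (hmem τφ hτφ)
    have h1 := (ae_restrict_iff' measurableSet_Ioo).mp hφα
    have h0 : ∀ᵐ x : ℝ, x ≠ 0 := by
      rw [ae_iff]
      have : {x : ℝ | ¬ x ≠ 0} = {0} := by ext x; simp
      rw [this]
      exact Real.volume_singleton
    have hae : ∀ᵐ x : ℝ, x ∈ uIoc (-τψ) (-τφ) → ‖φ' x‖ ≤ α := by
      filter_upwards [h1, h0] with x hx hx0 hxI
      rcases mem_uIoc.mp hxI with ⟨ha1, ha2⟩ | ⟨ha1, ha2⟩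
      · rw [Real.norm_eq_abs]
        refine hx ⟨by linarith [hτψ.2], ?_⟩
        rcases lt_or_eq_of_le (show x ≤ 0 by linarith [hτφ.1]) with hlt | heq
        · exact hlt
        · exact absurd heq hx0
      · rw [Real.norm_eq_abs]
        refine hx ⟨by linarith [hτφ.2], ?_⟩
        rcases lt_or_eq_of_le (show x ≤ 0 by linarith [hτψ.1]) with hlt | heq
        · exact hlt
        · exact absurd heq hx0
    have h2 := intervalIntegral.norm_integral_le_of_norm_le_const_ae hae
    have h3 : φ (-τφ) - φ (-τψ) = ∫ u in (-τψ)..(-τφ), φ' u := by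
      rw [hrep]; ring
    rw [h3]
    have h4 : |(-τφ) - (-τψ)| = |τφ - τψ| := by
      rw [show (-τφ) - (-τψ) = -(τφ - τψ) by ring, abs_neg]
    rw [Real.norm_eq_abs, h4] at h2
    exact h2
  have hstep2 : |φ (-τψ) - ψ (-τψ)| ≤ M := hM (-τψ) (hmem τψ hτψ)
  -- combine
  have hcomb : |φ (-τφ) - ψ (-τψ)| ≤ (1 + α * L * h * Real.exp (L * h) / ε) * M := by
    have htri : |φ (-τφ) - ψ (-τψ)| ≤ |φ (-τφ) - φ (-τψ)| + |φ (-τψ) - ψ (-τψ)| := by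
      have := abs_add_le (φ (-τφ) - φ (-τψ)) (φ (-τψ) - ψ (-τψ))
      simpa using this
    have h5 : α * |τφ - τψ| ≤ α * (Δ / ε) :=
      mul_le_mul_of_nonneg_left hτ hα.le
    have h6 : α * (Δ / ε) + M = (1 + α * L * h * Real.exp (L * h) / ε) * M := by
      rw [hΔdef]; field_simp; ring
    calc |φ (-τφ) - ψ (-τψ)| ≤ |φ (-τφ) - φ (-τψ)| + |φ (-τψ) - ψ (-τψ)| := htri
      _ ≤ α * |τφ - τψ| + M := add_le_add hstep1 hstep2
      _ ≤ α * (Δ / ε) + M := by linarith [h5]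
      _ = (1 + α * L * h * Real.exp (L * h) / ε) * M := h6
  -- bound M by the H¹ norm
  have hM2 : M ≤ (1 / Real.sqrt h + Real.sqrt h) * (Real.sqrt 2 * Real.sqrt (A + B)) := by
    have hsh : 0 < Real.sqrt h := Real.sqrt_pos.mpr hhpos
    have e1 : M ≤ (1 / Real.sqrt h + Real.sqrt h) * (Real.sqrt A + Real.sqrt B) := by
      rw [hMdef]
      have n1 : 0 ≤ Real.sqrt B / Real.sqrt h := by positivity
      have n2 : 0 ≤ Real.sqrt h * Real.sqrt A := by positivity
      have : (1 / Real.sqrt h + Real.sqrt h) * (Real.sqrt A + Real.sqrt B) =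
          Real.sqrt A / Real.sqrt h + Real.sqrt B / Real.sqrt h +
            Real.sqrt h * Real.sqrt A + Real.sqrt h * Real.sqrt B := by
        field_simp
        ring
      rw [this]
      linarith
    have e2 : (1 / Real.sqrt h + Real.sqrt h) * (Real.sqrt A + Real.sqrt B) ≤
        (1 / Real.sqrt h + Real.sqrt h) * (Real.sqrt 2 * Real.sqrt (A + B)) :=
      mul_le_mul_of_nonneg_left (sqrt_add_le_helper hA0 hB0) (by positivity)
    linarith
  have hc0 : 0 ≤ 1 + α * L * h * Real.exp (L * h) / ε := by positivity
  calc |φ (-τφ) - ψ (-τψ)| ≤ (1 + α * L * h * Real.exp (L * h) / ε) * M := hcomb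
    _ ≤ (1 + α * L * h * Real.exp (L * h) / ε) *
        ((1 / Real.sqrt h + Real.sqrt h) * (Real.sqrt 2 * Real.sqrt (A + B))) :=
      mul_le_mul_of_nonneg_left hM2 hc0
    _ = (1 + α * L * h * Real.exp (L * h) / ε) *
        ((1 / Real.sqrt h + Real.sqrt h) * Real.sqrt 2) * Real.sqrt (A + B) := by ring
end

section
/- Let G(φ) := ∫₀^{τ(φ)} (d - D₁g)(y(s,φ), φ(-s)) ds. If d - D₁g is Lipschitz with constant L_k and bounded by M_k on a suitable compact set N containing all relevant arguments, τ is Lipschitz with constant L_τ, and y is Lipschitz in the prehistory with constant L_y, then for φ, ψ ∈ H^1(-h,0;ℝ) ∩ B_{C}(φ₀,δ): |G(φ) - G(ψ)| ≤ (h L_k √(L_y² + (h^{1/2}+h^{-1/2})²) + M_k L_τ) ‖φ - ψ‖_{H^1(-h,0;ℝ)}. -/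
open MeasureTheory Set

set_option maxHeartbeats 2000000 in
/-- Key estimate in Lemma 3.10: for `G(φ) = ∫₀^{τ(φ)} (d - D₁g)(y(s,φ), φ(-s)) ds`
(here `k := d - D₁g`), if `k` is `L_k`-Lipschitz and bounded by `M_k` on a set `N`
containing all relevant arguments, `τ` is `L_τ`-Lipschitz and `y` is `L_y`-Lipschitz in
the prehistory, then for `φ, ψ ∈ H^1(-h,0;ℝ) ∩ B_C(φ₀,δ)`:
`|G(φ) - G(ψ)| ≤ (h L_k √(L_y² + (h^{1/2}+h^{-1/2})²) + M_k L_τ) ‖φ-ψ‖_{H^1}`. -/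
theorem G_integral_lipschitz
    (h δ L_k M_k L_τ L_y : ℝ) (hh : 0 < h) (hδ : 0 < δ)
    (hLk : 0 ≤ L_k) (hMk : 0 ≤ M_k) (hLτ : 0 ≤ L_τ) (hLy : 0 ≤ L_y)
    (k : ℝ → ℝ → ℝ) (N : Set (ℝ × ℝ))
    (hkLip : ∀ p ∈ N, ∀ q ∈ N,
      |k p.1 p.2 - k q.1 q.2| ≤ L_k * Real.sqrt ((p.1 - q.1) ^ 2 + (p.2 - q.2) ^ 2))
    (hkBd : ∀ p ∈ N, |k p.1 p.2| ≤ M_k)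
    (φ₀ φ φ' ψ ψ' : ℝ → ℝ)
    -- `φ, ψ` are `H^1` functions (continuous representatives with weak derivatives):
    (hφftc : ∀ s ∈ Icc (-h) 0, ∀ t ∈ Icc (-h) 0, φ t = φ s + ∫ u in s..t, φ' u)
    (hψftc : ∀ s ∈ Icc (-h) 0, ∀ t ∈ Icc (-h) 0, ψ t = ψ s + ∫ u in s..t, ψ' u)
    (hφint : IntervalIntegrable φ' volume (-h) 0)
    (hψint : IntervalIntegrable ψ' volume (-h) 0)
    (hd2 : IntervalIntegrable (fun t => (φ t - ψ t) ^ 2) volume (-h) 0)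
    (hd'2 : IntervalIntegrable (fun t => (φ' t - ψ' t) ^ 2) volume (-h) 0)
    -- `φ, ψ ∈ B_{C([-h,0])}(φ₀, δ)`:
    (hφball : ∀ t ∈ Icc (-h) 0, |φ t - φ₀ t| < δ)
    (hψball : ∀ t ∈ Icc (-h) 0, |ψ t - φ₀ t| < δ)
    -- the associated maturation solutions and delays:
    (yφ yψ : ℝ → ℝ) (τφ τψ : ℝ)
    (hτφ : τφ ∈ Icc (0 : ℝ) h) (hτψ : τψ ∈ Icc (0 : ℝ) h)
    (hNφ : ∀ s ∈ Icc (0 : ℝ) h, (yφ s, φ (-s)) ∈ N)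
    (hNψ : ∀ s ∈ Icc (0 : ℝ) h, (yψ s, ψ (-s)) ∈ N)
    (hkφint : IntervalIntegrable (fun s => k (yφ s) (φ (-s))) volume 0 h)
    (hkψint : IntervalIntegrable (fun s => k (yψ s) (ψ (-s))) volume 0 h)
    -- Lipschitz continuity of `τ` and of `y` in the prehistory:
    (hτLip : |τφ - τψ| ≤
      L_τ * Real.sqrt ((∫ u in (-h)..0, (φ u - ψ u) ^ 2) + ∫ u in (-h)..0, (φ' u - ψ' u) ^ 2))
    (hyLip : ∀ s ∈ Icc (0 : ℝ) h, |yφ s - yψ s| ≤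
      L_y * Real.sqrt ((∫ u in (-h)..0, (φ u - ψ u) ^ 2) + ∫ u in (-h)..0, (φ' u - ψ' u) ^ 2)) :
    |(∫ s in (0 : ℝ)..τφ, k (yφ s) (φ (-s))) - ∫ s in (0 : ℝ)..τψ, k (yψ s) (ψ (-s))| ≤
      (h * L_k * Real.sqrt (L_y ^ 2 + (Real.sqrt h + (Real.sqrt h)⁻¹) ^ 2) + M_k * L_τ) *
        Real.sqrt ((∫ u in (-h)..0, (φ u - ψ u) ^ 2) + ∫ u in (-h)..0, (φ' u - ψ' u) ^ 2) := by
  have hh' : (-h : ℝ) ≤ 0 := by linarith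
  set I2 := ∫ u in (-h)..0, (φ u - ψ u) ^ 2 with hI2def
  set I2' := ∫ u in (-h)..0, (φ' u - ψ' u) ^ 2 with hI2'def
  have hI2 : 0 ≤ I2 := intervalIntegral.integral_nonneg hh' (fun u _ => sq_nonneg _)
  have hI2' : 0 ≤ I2' := intervalIntegral.integral_nonneg hh' (fun u _ => sq_nonneg _)
  set S := Real.sqrt (I2 + I2') with hSdef
  have hS : 0 ≤ S := Real.sqrt_nonneg _
  have hsq2 : Real.sqrt I2 ≤ S := Real.sqrt_le_sqrt (by linarith)
  have hsq2' : Real.sqrt I2' ≤ S := Real.sqrt_le_sqrt (by linarith)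
  have hsh : 0 < Real.sqrt h := Real.sqrt_pos.mpr hh
  -- integrability of w' := φ' - ψ' and |w'|
  have hw'int : IntervalIntegrable (fun u => φ' u - ψ' u) volume (-h) 0 := hφint.sub hψint
  have habs : IntervalIntegrable (fun u => |φ' u - ψ' u|) volume (-h) 0 := hw'int.abs
  -- Cauchy–Schwarz: ∫ |w'| ≤ √h √I2'
  have hCS : (∫ u in (-h)..0, |φ' u - ψ' u|) ≤ Real.sqrt h * Real.sqrt I2' := by
    have key : ∀ t : ℝ, 0 < t →
        (∫ u in (-h)..0, |φ' u - ψ' u|) ≤ (t * I2' + h / t) / 2 := by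
      intro t ht
      have hint2 : IntervalIntegrable (fun u => (t * (φ' u - ψ' u) ^ 2 + 1 / t) / 2)
          volume (-h) 0 := ((hd'2.const_mul t).add intervalIntegrable_const).div_const 2
      have hmono : (∫ u in (-h)..0, |φ' u - ψ' u|) ≤
          ∫ u in (-h)..0, (t * (φ' u - ψ' u) ^ 2 + 1 / t) / 2 := by
        refine intervalIntegral.integral_mono_on hh' habs hint2 (fun u _ => ?_)
        rw [le_div_iff₀ (by norm_num : (0:ℝ) < 2), ← mul_le_mul_iff_right₀ ht]
        have ht' : t * (1 / t) = 1 := mul_one_div_cancel (ne_of_gt ht)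
        rcases abs_cases (φ' u - ψ' u) with ⟨he, _⟩ | ⟨he, _⟩ <;> rw [he] <;>
          nlinarith [sq_nonneg (t * (φ' u - ψ' u) - 1), sq_nonneg (t * (φ' u - ψ' u) + 1), ht']
      refine hmono.trans_eq ?_
      rw [intervalIntegral.integral_div, intervalIntegral.integral_add (hd'2.const_mul t)
        intervalIntegrable_const, intervalIntegral.integral_const_mul,
        intervalIntegral.integral_const]
      have : (0 - -h) • (1 / t) = h / t := by simp [smul_eq_mul]; ring
      rw [this]
    rcases eq_or_lt_of_le hI2' with hz | hpos
    · have h0 : (∫ u in (-h)..0, |φ' u - ψ' u|) ≤ 0 := by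
        refine le_of_forall_pos_le_add (fun ε hε => ?_)
        have := key (h / ε) (by positivity)
        rw [← hz] at this
        calc (∫ u in (-h)..0, |φ' u - ψ' u|) ≤ (h / ε * 0 + h / (h / ε)) / 2 := this
          _ = ε / 2 := by field_simp; ring
          _ ≤ 0 + ε := by linarith
      calc (∫ u in (-h)..0, |φ' u - ψ' u|) ≤ 0 := h0
        _ ≤ Real.sqrt h * Real.sqrt I2' := by positivity
    · have hsA : 0 < Real.sqrt I2' := Real.sqrt_pos.mpr hpos
      have := key (Real.sqrt h / Real.sqrt I2') (by positivity)
      refine this.trans_eq ?_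
      have e1 : Real.sqrt I2' * Real.sqrt I2' = I2' := Real.mul_self_sqrt hI2'
      have e2 : Real.sqrt h * Real.sqrt h = h := Real.mul_self_sqrt hh.le
      field_simp
      nlinarith [e1, e2, hsA, hsh]
  have hCS' : (∫ u in (-h)..0, |φ' u - ψ' u|) ≤ Real.sqrt h * S :=
    hCS.trans (by nlinarith)
  -- FTC representation of w := φ - ψ
  have hmemL : (-h : ℝ) ∈ Icc (-h) 0 := ⟨le_refl _, hh'⟩
  have hsubI : ∀ t ∈ Icc (-h) 0, ∀ s ∈ Icc (-h) 0, uIcc s t ⊆ uIcc (-h) 0 := by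
    intro t ht s hs
    refine uIcc_subset_uIcc ?_ ?_ <;> rw [uIcc_of_le hh']
    exacts [hs, ht]
  have hwftc : ∀ s ∈ Icc (-h) 0, ∀ t ∈ Icc (-h) 0,
      φ t - ψ t = (φ s - ψ s) + ∫ u in s..t, (φ' u - ψ' u) := by
    intro s hs t ht
    rw [intervalIntegral.integral_sub (hφint.mono_set (hsubI t ht s hs))
      (hψint.mono_set (hsubI t ht s hs))]
    rw [hφftc s hs t ht, hψftc s hs t ht]
    ring
  -- continuity of w on Icc
  have hwc : ContinuousOn (fun t => φ t - ψ t) (Icc (-h) 0) := by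
    have hio : IntegrableOn (fun u => φ' u - ψ' u) (uIcc (-h) 0) volume := by
      rw [uIcc_of_le hh']
      exact (intervalIntegrable_iff_integrableOn_Icc_of_le hh').mp hw'int
    have hc : ContinuousOn (fun t => (φ (-h) - ψ (-h)) +
        ∫ u in (-h)..t, (φ' u - ψ' u)) (Icc (-h) 0) := by
      have := (intervalIntegral.continuousOn_primitive_interval (a := -h) (b := 0) hio)
      rw [uIcc_of_le hh'] at this
      exact continuousOn_const.add this
    exact hc.congr (fun t ht => hwftc (-h) hmemL t ht)
  -- minimum point of w²
  obtain ⟨s₀, hs₀mem, hs₀min⟩ := isCompact_Icc.exists_isMinOn (nonempty_Icc.mpr hh')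
    (f := fun t => (φ t - ψ t) ^ 2) (hwc.pow 2)
  have hmin : (φ s₀ - ψ s₀) ^ 2 * h ≤ I2 := by
    have : (∫ u in (-h)..0, (φ s₀ - ψ s₀) ^ 2) ≤ I2 :=
      intervalIntegral.integral_mono_on hh' intervalIntegrable_const hd2
        (fun u hu => hs₀min hu)
    rwa [intervalIntegral.integral_const, smul_eq_mul, show (0 - -h) = h by ring,
      mul_comm] at this
  have hws₀ : |φ s₀ - ψ s₀| ≤ Real.sqrt I2 / Real.sqrt h := by
    rw [le_div_iff₀ hsh, ← Real.sqrt_sq_eq_abs, ← Real.sqrt_mul (sq_nonneg _)]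
    exact Real.sqrt_le_sqrt hmin
  -- sup bound
  have hsup : ∀ t ∈ Icc (-h) 0, |φ t - ψ t| ≤ (Real.sqrt h + (Real.sqrt h)⁻¹) * S := by
    intro t ht
    have h1 : φ t - ψ t = (φ s₀ - ψ s₀) + ∫ u in s₀..t, (φ' u - ψ' u) := hwftc s₀ hs₀mem t ht
    have h2 : |∫ u in s₀..t, (φ' u - ψ' u)| ≤ ∫ u in (-h)..0, |φ' u - ψ' u| := by
      rw [← Real.norm_eq_abs]
      refine (intervalIntegral.norm_integral_le_integral_norm_uIoc).trans ?_
      simp only [Real.norm_eq_abs]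
      rw [intervalIntegral.integral_of_le hh']
      refine setIntegral_mono_set ?_ ?_ ?_
      · exact (intervalIntegrable_iff.mp habs).mono_set (by
          rw [uIoc_of_le hh'])
      · exact Filter.Eventually.of_forall (fun u => abs_nonneg _)
      · have hss : uIoc s₀ t ⊆ Ioc (-h) 0 := by
          intro u hu
          rcases Set.mem_uIoc.mp hu with ⟨h3, h4⟩ | ⟨h3, h4⟩ <;>
            exact ⟨by linarith [hs₀mem.1, hs₀mem.2, ht.1, ht.2],
                   by linarith [hs₀mem.1, hs₀mem.2, ht.1, ht.2]⟩
        exact hss.eventuallyLE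
    have h3 : |φ t - ψ t| ≤ |φ s₀ - ψ s₀| + |∫ u in s₀..t, (φ' u - ψ' u)| := by
      rw [h1]; exact abs_add_le _ _
    have h4 : Real.sqrt I2 / Real.sqrt h ≤ (Real.sqrt h)⁻¹ * S := by
      rw [div_eq_inv_mul]
      exact mul_le_mul_of_nonneg_left hsq2 (by positivity)
    calc |φ t - ψ t| ≤ |φ s₀ - ψ s₀| + |∫ u in s₀..t, (φ' u - ψ' u)| := h3
      _ ≤ Real.sqrt I2 / Real.sqrt h + Real.sqrt h * S := add_le_add hws₀ (h2.trans hCS')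
      _ ≤ (Real.sqrt h)⁻¹ * S + Real.sqrt h * S := by linarith
      _ = (Real.sqrt h + (Real.sqrt h)⁻¹) * S := by ring
  -- pointwise bound on the integrand difference
  set C := Real.sqrt h + (Real.sqrt h)⁻¹ with hCdef
  have hC : 0 ≤ C := by positivity
  set B := L_k * Real.sqrt (L_y ^ 2 + C ^ 2) * S with hBdef
  have hB : 0 ≤ B := by positivity
  have hptw : ∀ s ∈ Icc (0:ℝ) h, |k (yφ s) (φ (-s)) - k (yψ s) (ψ (-s))| ≤ B := by
    intro s hs
    have h1 := hkLip _ (hNφ s hs) _ (hNψ s hs)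
    have h2 := hyLip s hs
    have hns : -s ∈ Icc (-h) 0 := ⟨by linarith [hs.2], by linarith [hs.1]⟩
    have h3 := hsup (-s) hns
    have hy2 : (yφ s - yψ s) ^ 2 ≤ (L_y * S) ^ 2 := by
      rw [← sq_abs (yφ s - yψ s)]
      exact pow_le_pow_left₀ (abs_nonneg _) h2 2
    have hw2 : (φ (-s) - ψ (-s)) ^ 2 ≤ (C * S) ^ 2 := by
      rw [← sq_abs (φ (-s) - ψ (-s))]
      exact pow_le_pow_left₀ (abs_nonneg _) h3 2
    calc |k (yφ s) (φ (-s)) - k (yψ s) (ψ (-s))|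
        ≤ L_k * Real.sqrt ((yφ s - yψ s) ^ 2 + (φ (-s) - ψ (-s)) ^ 2) := h1
      _ ≤ L_k * Real.sqrt ((L_y * S) ^ 2 + (C * S) ^ 2) := by
          exact mul_le_mul_of_nonneg_left (Real.sqrt_le_sqrt (by linarith)) hLk
      _ = B := by
          rw [hBdef]
          rw [show (L_y * S) ^ 2 + (C * S) ^ 2 = (L_y ^ 2 + C ^ 2) * S ^ 2 by ring,
            Real.sqrt_mul (by positivity), Real.sqrt_sq hS]
          ring
  -- integrability on subintervals
  have hsub1 : uIcc (0:ℝ) τψ ⊆ uIcc (0:ℝ) h := by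
    rw [uIcc_of_le hh.le, uIcc_of_le hτψ.1]
    exact Icc_subset_Icc le_rfl hτψ.2
  have hsub2 : uIcc τψ τφ ⊆ uIcc (0:ℝ) h := by
    refine uIcc_subset_uIcc ?_ ?_ <;> rw [uIcc_of_le hh.le]
    exacts [hτψ, hτφ]
  have hkφ1 : IntervalIntegrable (fun s => k (yφ s) (φ (-s))) volume 0 τψ :=
    hkφint.mono_set hsub1
  have hkφ2 : IntervalIntegrable (fun s => k (yφ s) (φ (-s))) volume τψ τφ :=
    hkφint.mono_set hsub2
  have hkψ1 : IntervalIntegrable (fun s => k (yψ s) (ψ (-s))) volume 0 τψ :=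
    hkψint.mono_set hsub1
  -- split the difference
  have hsplit : (∫ s in (0:ℝ)..τφ, k (yφ s) (φ (-s))) - ∫ s in (0:ℝ)..τψ, k (yψ s) (ψ (-s))
      = (∫ s in (0:ℝ)..τψ, (k (yφ s) (φ (-s)) - k (yψ s) (ψ (-s))))
        + ∫ s in τψ..τφ, k (yφ s) (φ (-s)) := by
    rw [intervalIntegral.integral_sub hkφ1 hkψ1,
      ← intervalIntegral.integral_add_adjacent_intervals hkφ1 hkφ2]
    ring
  -- bound the two pieces
  have hpiece1 : |∫ s in (0:ℝ)..τψ, (k (yφ s) (φ (-s)) - k (yψ s) (ψ (-s)))| ≤ B * h := by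
    have := intervalIntegral.norm_integral_le_of_norm_le_const
      (a := 0) (b := τψ) (C := B)
      (f := fun s => k (yφ s) (φ (-s)) - k (yψ s) (ψ (-s))) ?_
    · rw [Real.norm_eq_abs] at this
      refine this.trans ?_
      have : |τψ - 0| = τψ := by rw [sub_zero, abs_of_nonneg hτψ.1]
      rw [this]
      exact mul_le_mul_of_nonneg_left hτψ.2 hB
    · intro x hx
      rw [uIoc_of_le hτψ.1] at hx
      exact hptw x ⟨hx.1.le, hx.2.trans hτψ.2⟩
  have hpiece2 : |∫ s in τψ..τφ, k (yφ s) (φ (-s))| ≤ M_k * (L_τ * S) := by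
    have hb := intervalIntegral.norm_integral_le_of_norm_le_const
      (a := τψ) (b := τφ) (C := M_k) (f := fun s => k (yφ s) (φ (-s))) ?_
    · rw [Real.norm_eq_abs] at hb
      refine hb.trans ?_
      have habs2 : |τφ - τψ| ≤ L_τ * S := hτLip
      exact mul_le_mul_of_nonneg_left habs2 hMk
    · intro x hx
      have hmem : x ∈ Icc (0:ℝ) h := by
        rcases Set.mem_uIoc.mp hx with ⟨h3, h4⟩ | ⟨h3, h4⟩
        · exact ⟨by linarith [hτψ.1], by linarith [hτφ.2]⟩
        · exact ⟨by linarith [hτφ.1], by linarith [hτψ.2]⟩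
      exact hkBd _ (hNφ x hmem)
  -- combine
  rw [hsplit]
  calc |(∫ s in (0:ℝ)..τψ, (k (yφ s) (φ (-s)) - k (yψ s) (ψ (-s))))
        + ∫ s in τψ..τφ, k (yφ s) (φ (-s))|
      ≤ |∫ s in (0:ℝ)..τψ, (k (yφ s) (φ (-s)) - k (yψ s) (ψ (-s)))|
        + |∫ s in τψ..τφ, k (yφ s) (φ (-s))| := abs_add_le _ _
    _ ≤ B * h + M_k * (L_τ * S) := add_le_add hpiece1 hpiece2
    _ = (h * L_k * Real.sqrt (L_y ^ 2 + C ^ 2) + M_k * L_τ) * S := by rw [hBdef]; ring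
end
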